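/- arXiv:2101.07319 — 6 statements merged into one kernel-verified Lean document; each statement's English description precedes it below -/
import Mathlib

section
/- Let n ≥ 2, let γ : (0,∞) → (0,∞) be continuous and strictly monotone, and let p₁,…,pₙ > 0 with p₁+…+pₙ = 1. Then the weighted quasigeometric mean M_p^{[γ]} satisfies M_p^{[γ]}(x₁,…,xₙ)·M_p^{[γ]}(1/x₁,…,1/xₙ) = 1 for all x₁,…,xₙ > 0 if and only if the generator γ satisfies the functional equation γ(x)·γ(1/x) = (γ(1))² for all x > 0. -/
open Set Function

set_option maxHeartbeats 1000000

private lemma dense_aux (Z : Set ℝ) (h0 : (0:ℝ) ∈ Z) (r : ℝ)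
    (hr2 : 1/2 ≤ r) (hr1 : r < 1)
    (hcl : ∀ z ∈ Z, r*z ∈ Z ∧ r*z + (1-r) ∈ Z) :
    ∀ m : ℕ, ∀ x ∈ Icc (0:ℝ) 1, ∃ z ∈ Z, |x - z| ≤ r^m := by
  intro m
  induction m with
  | zero =>
    intro x hx
    refine ⟨0, h0, ?_⟩
    rw [pow_zero, sub_zero, abs_of_nonneg hx.1]
    exact hx.2
  | succ m ih =>
    intro x hx
    have hr0 : 0 < r := by linarith
    by_cases hxr : x ≤ r
    · obtain ⟨z, hz, hdist⟩ := ih (x/r) ⟨div_nonneg hx.1 hr0.le, by rw [div_le_one hr0]; exact hxr⟩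
      refine ⟨r*z, (hcl z hz).1, ?_⟩
      have he : x - r*z = r * (x/r - z) := by field_simp
      rw [he, abs_mul, abs_of_pos hr0, pow_succ, mul_comm (r^m) r]
      exact mul_le_mul_of_nonneg_left hdist hr0.le
    · push_neg at hxr
      have h1r : 1 - r ≤ x := by linarith
      obtain ⟨z, hz, hdist⟩ := ih ((x-(1-r))/r)
        ⟨div_nonneg (by linarith) hr0.le, by rw [div_le_one hr0]; linarith [hx.2]⟩
      refine ⟨r*z + (1-r), (hcl z hz).2, ?_⟩
      have he : x - (r*z + (1-r)) = r * ((x-(1-r))/r - z) := by field_simp; ring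
      rw [he, abs_mul, abs_of_pos hr0, pow_succ, mul_comm (r^m) r]
      exact mul_le_mul_of_nonneg_left hdist hr0.le

/-- Theorem 1 of the paper. For `n ≥ 2`, a continuous strictly
monotone generator `γ : (0,∞) → (0,∞)` and weights `p₁,…,pₙ > 0` summing to `1`,
the weighted quasigeometric mean `M_p^{[γ]}(x) = γ⁻¹(∏ⱼ γ(xⱼ)^{pⱼ})` satisfies
`M(x)·M(1/x) = 1` for all positive `x` iff `γ(x)·γ(1/x) = γ(1)²` for all `x > 0`. -/
theorem stmt_0 (n : ℕ) (hn : 2 ≤ n) (γ : ℝ → ℝ)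
    (hγ_maps : ∀ x ∈ Ioi (0:ℝ), γ x ∈ Ioi (0:ℝ))
    (hγ_cont : ContinuousOn γ (Ioi 0))
    (hγ_mono : StrictMonoOn γ (Ioi 0) ∨ StrictAntiOn γ (Ioi 0))
    (p : Fin n → ℝ) (hp : ∀ j, 0 < p j) (hp1 : ∑ j, p j = 1)
    (M : (Fin n → ℝ) → ℝ)
    (hM : ∀ x : Fin n → ℝ, (∀ j, 0 < x j) →
      M x = invFunOn γ (Ioi 0) (∏ j, γ (x j) ^ p j)) :
    (∀ x : Fin n → ℝ, (∀ j, 0 < x j) → M x * M (fun j => (x j)⁻¹) = 1) ↔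
      (∀ x : ℝ, 0 < x → γ x * γ x⁻¹ = γ 1 ^ 2) := by
  haveI : NeZero n := ⟨by omega⟩
  have hγpos : ∀ y : ℝ, 0 < y → 0 < γ y := fun y hy => hγ_maps y (mem_Ioi.mpr hy)
  have hc : 0 < γ 1 := hγpos 1 one_pos
  have hSpos : ∀ s ∈ γ '' Ioi 0, 0 < s := by rintro s ⟨y, hy, rfl⟩; exact hγpos y hy
  have hSord : OrdConnected (γ '' Ioi 0) :=
    ((isPreconnected_Ioi).image γ hγ_cont).ordConnected
  have hinj : InjOn γ (Ioi 0) := by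
    rcases hγ_mono with h | h
    exacts [h.injOn, h.injOn]
  have hXinv : ∀ y : ℝ, 0 < y → invFunOn γ (Ioi 0) (γ y) = y :=
    fun y hy => hinj.leftInvOn_invFunOn (mem_Ioi.mpr hy)
  -- constant-base product of rpow
  have hpow : ∀ a : ℝ, 0 < a → ∀ t : Fin n → ℝ, ∏ j, a ^ t j = a ^ (∑ j, t j) := by
    intro a ha t
    simp only [Real.rpow_def_of_pos ha]
    rw [← Real.exp_sum, Finset.mul_sum]
  -- geometric-mean membership
  have hmean : ∀ s : Fin n → ℝ, (∀ j, s j ∈ γ '' Ioi 0) → (∏ j, s j ^ p j) ∈ γ '' Ioi 0 := by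
    intro s hs
    have hpos : ∀ j, 0 < s j := fun j => hSpos _ (hs j)
    obtain ⟨j₀, _, hmin⟩ := Finset.exists_min_image Finset.univ s ⟨0, Finset.mem_univ 0⟩
    obtain ⟨j₁, _, hmax⟩ := Finset.exists_max_image Finset.univ s ⟨0, Finset.mem_univ 0⟩
    have hlow1 : ∏ j, s j₀ ^ p j ≤ ∏ j, s j ^ p j :=
      Finset.prod_le_prod (fun j _ => (Real.rpow_pos_of_pos (hpos j₀) _).le)
        (fun j _ => Real.rpow_le_rpow (hpos j₀).le (hmin j (Finset.mem_univ j)) (hp j).le)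
    have hup1 : ∏ j, s j ^ p j ≤ ∏ j, s j₁ ^ p j :=
      Finset.prod_le_prod (fun j _ => (Real.rpow_pos_of_pos (hpos j) _).le)
        (fun j _ => Real.rpow_le_rpow (hpos j).le (hmax j (Finset.mem_univ j)) (hp j).le)
    have hlow : s j₀ ≤ ∏ j, s j ^ p j := by
      rw [hpow _ (hpos j₀) p, hp1, Real.rpow_one] at hlow1
      exact hlow1
    have hup : ∏ j, s j ^ p j ≤ s j₁ := by
      rw [hpow _ (hpos j₁) p, hp1, Real.rpow_one] at hup1
      exact hup1
    exact hSord.out (hs j₀) (hs j₁) ⟨hlow, hup⟩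
  have hMfacts : ∀ x : Fin n → ℝ, (∀ j, 0 < x j) →
      0 < M x ∧ γ (M x) = ∏ j, γ (x j) ^ p j := by
    intro x hx
    have hPS : (∏ j, γ (x j) ^ p j) ∈ γ '' Ioi 0 :=
      hmean _ (fun j => ⟨x j, mem_Ioi.mpr (hx j), rfl⟩)
    obtain ⟨y, hy, hyeq⟩ := hPS
    rw [hM x hx]
    exact ⟨mem_Ioi.mp (invFunOn_mem ⟨y, hy, hyeq⟩), invFunOn_eq ⟨y, hy, hyeq⟩⟩
  constructor
  · -- forward direction
    intro H
    set c := γ 1 with hc_def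
    set J : Set ℝ := {a : ℝ | c * Real.exp a ∈ γ '' Ioi 0} with hJ_def
    set Xf : ℝ → ℝ := fun a => invFunOn γ (Ioi 0) (c * Real.exp a) with hXf_def
    set U : ℝ → ℝ := fun a => Real.log (γ (Xf a)⁻¹) - Real.log c with hU_def
    have hXmem : ∀ a ∈ J, 0 < Xf a ∧ γ (Xf a) = c * Real.exp a := by
      intro a ha
      obtain ⟨y, hy, hyeq⟩ := ha
      exact ⟨mem_Ioi.mp (invFunOn_mem ⟨y, hy, hyeq⟩), invFunOn_eq ⟨y, hy, hyeq⟩⟩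
    have hUval : ∀ a ∈ J, γ (Xf a)⁻¹ = c * Real.exp (U a) := by
      intro a ha
      have hgp : 0 < γ (Xf a)⁻¹ := hγpos _ (inv_pos.mpr (hXmem a ha).1)
      simp only [hU_def]
      rw [Real.exp_sub, Real.exp_log hgp, Real.exp_log hc]
      field_simp
    have hUJ : ∀ a ∈ J, U a ∈ J := by
      intro a ha
      show c * Real.exp (U a) ∈ γ '' Ioi 0
      rw [← hUval a ha]
      exact ⟨(Xf a)⁻¹, mem_Ioi.mpr (inv_pos.mpr (hXmem a ha).1), rfl⟩
    have hkeyprod : ∀ t : Fin n → ℝ,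
        ∏ j, (c * Real.exp (t j)) ^ p j = c * Real.exp (∑ j, p j * t j) := by
      intro t
      have h1 : ∀ j : Fin n, (c * Real.exp (t j)) ^ p j
          = Real.exp ((Real.log c + t j) * p j) := by
        intro j
        rw [Real.rpow_def_of_pos (by positivity), Real.log_mul hc.ne' (Real.exp_ne_zero _),
          Real.log_exp]
      rw [Finset.prod_congr rfl (fun j _ => h1 j), ← Real.exp_sum]
      have h2 : ∑ j, (Real.log c + t j) * p j = Real.log c * (∑ j, p j) + ∑ j, p j * t j := by
        rw [Finset.mul_sum, ← Finset.sum_add_distrib]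
        exact Finset.sum_congr rfl (fun j _ => by ring)
      rw [h2, hp1, mul_one, Real.exp_add, Real.exp_log hc]
    -- the key functional relation for U
    have hkey : ∀ a : Fin n → ℝ, (∀ j, a j ∈ J) →
        (∑ j, p j * a j) ∈ J ∧ U (∑ j, p j * a j) = ∑ j, p j * U (a j) := by
      intro a ha
      set x : Fin n → ℝ := fun j => Xf (a j) with hx_def
      have hxpos : ∀ j, 0 < x j := fun j => (hXmem _ (ha j)).1
      have hγx : ∀ j, γ (x j) = c * Real.exp (a j) := fun j => (hXmem _ (ha j)).2
      have hP : ∏ j, γ (x j) ^ p j = c * Real.exp (∑ j, p j * a j) := by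
        rw [Finset.prod_congr rfl (fun j _ => by rw [hγx j])]
        exact hkeyprod a
      have hPJ : (∑ j, p j * a j) ∈ J := by
        show c * Real.exp (∑ j, p j * a j) ∈ γ '' Ioi 0
        rw [← hP]
        exact hmean _ (fun j => ⟨x j, mem_Ioi.mpr (hxpos j), rfl⟩)
      have hMx := hMfacts x hxpos
      have hMx_eq_X : M x = Xf (∑ j, p j * a j) := by
        rw [hM x hxpos]
        show invFunOn γ (Ioi 0) (∏ j, γ (x j) ^ p j) = _
        rw [hP]
      have hγxinv : ∀ j, γ (x j)⁻¹ = c * Real.exp (U (a j)) := fun j => hUval _ (ha j)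
      have hQ : ∏ j, γ ((x j)⁻¹) ^ p j = c * Real.exp (∑ j, p j * U (a j)) := by
        rw [Finset.prod_congr rfl (fun j _ => by rw [hγxinv j])]
        exact hkeyprod _
      have hxinvpos : ∀ j, 0 < (x j)⁻¹ := fun j => inv_pos.mpr (hxpos j)
      have hMinv := hMfacts (fun j => (x j)⁻¹) hxinvpos
      have hH := H x hxpos
      have hMinv_eq : M (fun j => (x j)⁻¹) = (M x)⁻¹ :=
        mul_left_cancel₀ hMx.1.ne' (by rw [hH, mul_inv_cancel₀ hMx.1.ne'])
      have hγMinv : γ ((M x)⁻¹) = c * Real.exp (∑ j, p j * U (a j)) := by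
        rw [← hMinv_eq, hMinv.2, hQ]
      refine ⟨hPJ, ?_⟩
      have : U (∑ j, p j * a j)
          = Real.log (γ ((Xf (∑ j, p j * a j))⁻¹)) - Real.log c := rfl
      rw [this, ← hMx_eq_X, hγMinv, Real.log_mul hc.ne' (Real.exp_ne_zero _), Real.log_exp]
      ring
    have hJ0 : (0:ℝ) ∈ J := by
      show c * Real.exp 0 ∈ γ '' Ioi 0
      rw [Real.exp_zero, mul_one]
      exact ⟨1, mem_Ioi.mpr one_pos, rfl⟩
    have hX0 : Xf 0 = 1 := by
      show invFunOn γ (Ioi 0) (c * Real.exp 0) = 1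
      rw [Real.exp_zero, mul_one, hc_def]
      exact hXinv 1 one_pos
    have hU0 : U 0 = 0 := by
      simp only [hU_def, hX0, inv_one, hc_def, sub_self]
    have hUinv : ∀ a ∈ J, U (U a) = a := by
      intro a ha
      have hXUa : Xf (U a) = (Xf a)⁻¹ := by
        show invFunOn γ (Ioi 0) (c * Real.exp (U a)) = _
        rw [← hUval a ha]
        exact hXinv _ (inv_pos.mpr (hXmem a ha).1)
      show Real.log (γ (Xf (U a))⁻¹) - Real.log c = a
      rw [hXUa, inv_inv, (hXmem a ha).2, Real.log_mul hc.ne' (Real.exp_ne_zero _),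
        Real.log_exp]
      ring
    have hanti : ∀ a ∈ J, ∀ b ∈ J, a < b → U b < U a := by
      intro a ha b hb hab
      have hxa := (hXmem a ha).1
      have hxb := (hXmem b hb).1
      have h1 : γ (Xf a) < γ (Xf b) := by
        rw [(hXmem a ha).2, (hXmem b hb).2]
        exact (mul_lt_mul_iff_right₀ hc).mpr (Real.exp_lt_exp.mpr hab)
      have h2 : γ ((Xf b)⁻¹) < γ ((Xf a)⁻¹) := by
        rcases hγ_mono with hm | hm
        · have hxx : Xf a < Xf b := (hm.lt_iff_lt (mem_Ioi.mpr hxa) (mem_Ioi.mpr hxb)).mp h1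
          exact hm (mem_Ioi.mpr (inv_pos.mpr hxb)) (mem_Ioi.mpr (inv_pos.mpr hxa))
            (inv_strictAnti₀ hxa hxx)
        · have hxx : Xf b < Xf a := (hm.lt_iff_gt (mem_Ioi.mpr hxa) (mem_Ioi.mpr hxb)).mp h1
          exact hm (mem_Ioi.mpr (inv_pos.mpr hxa)) (mem_Ioi.mpr (inv_pos.mpr hxb))
            (inv_strictAnti₀ hxb hxx)
      have h3 : c * Real.exp (U b) < c * Real.exp (U a) := by
        rw [← hUval a ha, ← hUval b hb]
        exact h2
      exact Real.exp_lt_exp.mp ((mul_lt_mul_iff_right₀ hc).mp h3)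
    have hantile : ∀ u ∈ J, ∀ v ∈ J, u ≤ v → U v ≤ U u := by
      intro u hu v hv huv
      rcases eq_or_lt_of_le huv with h | h
      · rw [h]
      · exact (hanti u hu v hv h).le
    have hJord : OrdConnected J := by
      constructor
      intro u hu v hv w hw
      show c * Real.exp w ∈ γ '' Ioi 0
      exact hSord.out hu hv
        ⟨mul_le_mul_of_nonneg_left (Real.exp_le_exp.mpr hw.1) hc.le,
         mul_le_mul_of_nonneg_left (Real.exp_le_exp.mpr hw.2) hc.le⟩
    have hJconv : Convex ℝ J := convex_iff_ordConnected.mpr hJord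
    have hlogmem : ∀ y : ℝ, 0 < y →
        (Real.log (γ y) - Real.log c ∈ J ∧ Xf (Real.log (γ y) - Real.log c) = y) := by
      intro y hy
      have hgy : 0 < γ y := hγpos y hy
      have hval : c * Real.exp (Real.log (γ y) - Real.log c) = γ y := by
        rw [Real.exp_sub, Real.exp_log hgy, Real.exp_log hc]
        field_simp
      constructor
      · show c * Real.exp _ ∈ γ '' Ioi 0
        rw [hval]
        exact ⟨y, mem_Ioi.mpr hy, rfl⟩
      · show invFunOn γ (Ioi 0) (c * Real.exp _) = y
        rw [hval]
        exact hXinv y hy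
    -- small symmetric element η
    have hde : ∃ d e : ℝ, d ∈ J ∧ e ∈ J ∧ d < 0 ∧ 0 < e := by
      have h2 := hlogmem 2 two_pos
      have hh := hlogmem 2⁻¹ (by norm_num)
      have hc2 : 0 < γ 2 := hγpos 2 two_pos
      have hch : 0 < γ 2⁻¹ := hγpos 2⁻¹ (by norm_num)
      rcases hγ_mono with hm | hm
      · have e1 : γ 2⁻¹ < γ 1 := hm (by norm_num) (by norm_num) (by norm_num)
        have e2 : γ 1 < γ 2 := hm (by norm_num) (by norm_num) (by norm_num)
        exact ⟨_, _, hh.1, h2.1, sub_neg.mpr (hc_def ▸ Real.log_lt_log hch e1),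
          sub_pos.mpr (hc_def ▸ Real.log_lt_log hc e2)⟩
      · have e1 : γ 1 < γ 2⁻¹ := hm (by norm_num) (by norm_num) (by norm_num)
        have e2 : γ 2 < γ 1 := hm (by norm_num) (by norm_num) (by norm_num)
        exact ⟨_, _, h2.1, hh.1, sub_neg.mpr (hc_def ▸ Real.log_lt_log hc2 e2),
          sub_pos.mpr (hc_def ▸ Real.log_lt_log hc e1)⟩
    obtain ⟨d, e, hdJ, heJ, hd0, he0⟩ := hde
    set η := min e (-d) with hη_def
    have hηpos : 0 < η := lt_min he0 (neg_pos.mpr hd0)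
    have hηJ : η ∈ J := hJord.out hJ0 heJ ⟨hηpos.le, min_le_left _ _⟩
    have hmηJ : -η ∈ J := hJord.out hdJ hJ0
      ⟨by linarith [min_le_right e (-d)], by linarith⟩
    -- full Jensen equation
    have hJen : ∀ a ∈ J, ∀ b ∈ J, ∀ l ∈ Icc (0:ℝ) 1,
        U (l*a + (1-l)*b) = l * U a + (1-l) * U b := by
      intro a ha b hb
      set Z : Set ℝ := {l : ℝ | l ∈ Icc (0:ℝ) 1 ∧
        U (l*a + (1-l)*b) = l * U a + (1-l) * U b} with hZ_def
      have hcomb : ∀ l ∈ Icc (0:ℝ) 1, l*a+(1-l)*b ∈ J := by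
        intro l hl
        have := hJconv ha hb (a := l) (b := 1 - l) hl.1 (by linarith [hl.2]) (by ring)
        simpa [smul_eq_mul] using this
      have hZ0 : (0:ℝ) ∈ Z := by
        refine mem_setOf.mpr ⟨by norm_num, ?_⟩
        norm_num
      have hZ1 : (1:ℝ) ∈ Z := by
        refine mem_setOf.mpr ⟨by norm_num, ?_⟩
        norm_num
      have hp0lt : p 0 < 1 := by
        have hmem : (⟨1, by omega⟩ : Fin n) ∈ Finset.univ.erase (0 : Fin n) :=
          Finset.mem_erase.mpr ⟨by simp [Fin.ext_iff], Finset.mem_univ _⟩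
        have h1 := Finset.add_sum_erase Finset.univ p (Finset.mem_univ (0 : Fin n))
        have h2 : p ⟨1, by omega⟩ ≤ ∑ j ∈ Finset.univ.erase (0 : Fin n), p j :=
          Finset.single_le_sum (fun j _ => (hp j).le) hmem
        have h3 := hp (⟨1, by omega⟩ : Fin n)
        rw [hp1] at h1
        linarith
      have hsum_ite : ∀ X Y : ℝ,
          ∑ j, p j * (if j = (0:Fin n) then X else Y) = p 0 * X + (1 - p 0) * Y := by
        intro X Y
        have h1 : ∑ j ∈ Finset.univ.erase (0:Fin n), p j = 1 - p 0 := by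
          have := Finset.add_sum_erase Finset.univ p (Finset.mem_univ (0:Fin n))
          rw [hp1] at this
          linarith
        rw [← Finset.add_sum_erase _ _ (Finset.mem_univ (0:Fin n))]
        simp only [if_pos rfl]
        have h2 : ∑ j ∈ Finset.univ.erase (0:Fin n), p j * (if j = (0:Fin n) then X else Y)
            = ∑ j ∈ Finset.univ.erase (0:Fin n), p j * Y :=
          Finset.sum_congr rfl (fun j hj => by rw [if_neg (Finset.mem_erase.mp hj).1])
        rw [h2, ← Finset.sum_mul, h1]
        simp
      have hbin : ∀ l ∈ Z, ∀ m ∈ Z, ((1 - p 0)*l + p 0 * m) ∈ Z := by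
        intro l hl m hm
        obtain ⟨hl1, hl2⟩ := hl
        obtain ⟨hm1, hm2⟩ := hm
        have hav : ∀ j : Fin n,
            (if j = (0:Fin n) then m*a+(1-m)*b else l*a+(1-l)*b) ∈ J := by
          intro j
          by_cases h : j = 0
          · rw [if_pos h]; exact hcomb m hm1
          · rw [if_neg h]; exact hcomb l hl1
        obtain ⟨hmemJ', heq⟩ :=
          hkey (fun j => if j = (0:Fin n) then m*a+(1-m)*b else l*a+(1-l)*b) hav
        have hL1 : ∑ j, p j * (if j = (0:Fin n) then m*a+(1-m)*b else l*a+(1-l)*b)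
            = ((1-p 0)*l + p 0*m)*a + (1 - ((1-p 0)*l + p 0*m))*b := by
          rw [hsum_ite]; ring
        have hL2 : ∑ j, p j * U (if j = (0:Fin n) then m*a+(1-m)*b else l*a+(1-l)*b)
            = ((1-p 0)*l + p 0*m) * U a + (1 - ((1-p 0)*l + p 0*m)) * U b := by
          have h3 : ∀ j : Fin n, p j * U (if j = (0:Fin n) then m*a+(1-m)*b else l*a+(1-l)*b)
              = p j * (if j = (0:Fin n) then (m * U a + (1-m)*U b)
                  else (l * U a + (1-l)*U b)) := by
            intro j
            by_cases h : j = 0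
            · rw [if_pos h, if_pos h, hm2]
            · rw [if_neg h, if_neg h, hl2]
          rw [Finset.sum_congr rfl (fun j _ => h3 j), hsum_ite]
          ring
        refine ⟨⟨?_, ?_⟩, ?_⟩
        · nlinarith [hp 0, hl1.1, hm1.1, hp0lt]
        · nlinarith [hp 0, hl1.2, hm1.2, hp0lt]
        · rw [← hL1, heq, hL2]
      set r := max (p 0) (1 - p 0) with hr_def
      have hr2 : 1/2 ≤ r := by
        rcases le_total (p 0) (1 - p 0) with h | h
        · rw [hr_def, max_eq_right h]; linarith
        · rw [hr_def, max_eq_left h]; linarith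
      have hr1 : r < 1 := max_lt hp0lt (by linarith [hp 0])
      have hcl : ∀ z ∈ Z, r*z ∈ Z ∧ r*z + (1-r) ∈ Z := by
        intro z hz
        rcases max_choice (p 0) (1 - p 0) with h | h
        · constructor
          · have h1 := hbin 0 hZ0 z hz
            rwa [show (1 - p 0)*0 + p 0 * z = r*z by rw [hr_def, h]; ring] at h1
          · have h1 := hbin 1 hZ1 z hz
            rwa [show (1 - p 0)*1 + p 0 * z = r*z + (1-r) by rw [hr_def, h]; ring] at h1
        · constructor
          · have h1 := hbin z hz 0 hZ0
            rwa [show (1 - p 0)*z + p 0 * 0 = r*z by rw [hr_def, h]; ring] at h1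
          · have h1 := hbin z hz 1 hZ1
            rwa [show (1 - p 0)*z + p 0 * 1 = r*z + (1-r) by rw [hr_def, h]; ring] at h1
      have hdense := dense_aux Z hZ0 r hr2 hr1 hcl
      -- squeeze argument
      intro l hl
      set D := U (l*a + (1-l)*b) - (l * U a + (1-l) * U b) with hD_def
      have hK : (0:ℝ) < |U a - U b| + 1 := by positivity
      have hmain : ∀ δ : ℝ, 0 < δ → |D| ≤ (|U a - U b| + 1) * δ := by
        intro δ hδ
        have hz₁ : ∃ z₁ ∈ Z, z₁ ≤ l ∧ l - z₁ ≤ δ/2 := by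
          by_cases hcase : l ≤ δ/2
          · exact ⟨0, hZ0, hl.1, by linarith⟩
          · push_neg at hcase
            obtain ⟨m', hm'⟩ := exists_pow_lt_of_lt_one (by linarith : (0:ℝ) < δ/4) hr1
            obtain ⟨z, hz, hdist⟩ := hdense m' (l - δ/4)
              ⟨by linarith, by linarith [hl.2]⟩
            have habs := abs_le.mp (le_of_lt (lt_of_le_of_lt hdist hm'))
            exact ⟨z, hz, by linarith [habs.1, habs.2], by linarith [habs.1, habs.2]⟩
        have hz₂ : ∃ z₂ ∈ Z, l ≤ z₂ ∧ z₂ - l ≤ δ/2 := by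
          by_cases hcase : 1 - l ≤ δ/2
          · exact ⟨1, hZ1, hl.2, by linarith⟩
          · push_neg at hcase
            obtain ⟨m', hm'⟩ := exists_pow_lt_of_lt_one (by linarith : (0:ℝ) < δ/4) hr1
            obtain ⟨z, hz, hdist⟩ := hdense m' (l + δ/4)
              ⟨by linarith [hl.1], by linarith⟩
            have habs := abs_le.mp (le_of_lt (lt_of_le_of_lt hdist hm'))
            exact ⟨z, hz, by linarith [habs.1, habs.2], by linarith [habs.1, habs.2]⟩
        obtain ⟨z₁, hz₁Z, hz₁l, hz₁d⟩ := hz₁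
        obtain ⟨z₂, hz₂Z, hz₂l, hz₂d⟩ := hz₂
        set A := z₁ * U a + (1-z₁) * U b with hA_def
        set B := z₂ * U a + (1-z₂) * U b with hB_def
        have hwJ : l*a+(1-l)*b ∈ J := hcomb l hl
        have hw₁J : z₁*a+(1-z₁)*b ∈ J := hcomb z₁ hz₁Z.1
        have hw₂J : z₂*a+(1-z₂)*b ∈ J := hcomb z₂ hz₂Z.1
        have hUw₁ : U (z₁*a+(1-z₁)*b) = A := hz₁Z.2
        have hUw₂ : U (z₂*a+(1-z₂)*b) = B := hz₂Z.2
        have hUw_betw : min A B ≤ U (l*a+(1-l)*b) ∧ U (l*a+(1-l)*b) ≤ max A B := by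
          rcases le_total a b with hab | hab
          · have hw1 : l*a+(1-l)*b ≤ z₁*a+(1-z₁)*b := by nlinarith
            have hw2 : z₂*a+(1-z₂)*b ≤ l*a+(1-l)*b := by nlinarith
            have h1 := hantile _ hwJ _ hw₁J hw1
            have h2 := hantile _ hw₂J _ hwJ hw2
            rw [hUw₁] at h1
            rw [hUw₂] at h2
            exact ⟨(min_le_left A B).trans h1, h2.trans (le_max_right A B)⟩
          · have hw1 : z₁*a+(1-z₁)*b ≤ l*a+(1-l)*b := by nlinarith
            have hw2 : l*a+(1-l)*b ≤ z₂*a+(1-z₂)*b := by nlinarith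
            have h1 := hantile _ hw₁J _ hwJ hw1
            have h2 := hantile _ hwJ _ hw₂J hw2
            rw [hUw₁] at h1
            rw [hUw₂] at h2
            exact ⟨(min_le_right A B).trans h2, h1.trans (le_max_left A B)⟩
        have hhl_betw : min A B ≤ l * U a + (1-l) * U b ∧
            l * U a + (1-l) * U b ≤ max A B := by
          rcases le_total (U b) (U a) with h | h
          · have h1 : A ≤ l * U a + (1-l)*U b := by nlinarith
            have h2 : l * U a + (1-l)*U b ≤ B := by nlinarith
            exact ⟨(min_le_left A B).trans h1, h2.trans (le_max_right A B)⟩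
          · have h1 : B ≤ l * U a + (1-l)*U b := by nlinarith
            have h2 : l * U a + (1-l)*U b ≤ A := by nlinarith
            exact ⟨(min_le_right A B).trans h1, h2.trans (le_max_left A B)⟩
        have hABdiff : max A B - min A B ≤ (|U a - U b| + 1) * δ := by
          have h1 : max A B - min A B = |B - A| := by
            rcases le_total A B with h | h
            · rw [max_eq_right h, min_eq_left h, abs_of_nonneg (by linarith)]
            · rw [max_eq_left h, min_eq_right h, abs_of_nonpos (by linarith)]; ring
          have h2 : B - A = (z₂ - z₁) * (U a - U b) := by
            rw [hA_def, hB_def]; ring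
          rw [h1, h2, abs_mul]
          have h3 : |z₂ - z₁| ≤ δ := by
            rw [abs_of_nonneg (by linarith)]; linarith
          calc |z₂ - z₁| * |U a - U b| ≤ δ * |U a - U b| :=
              mul_le_mul_of_nonneg_right h3 (abs_nonneg _)
          _ ≤ (|U a - U b| + 1) * δ := by nlinarith [abs_nonneg (U a - U b)]
        refine abs_le.mpr ⟨?_, ?_⟩
        · have := hUw_betw.1
          have := hhl_betw.2
          simp only [hD_def]
          linarith
        · have := hUw_betw.2
          have := hhl_betw.1
          simp only [hD_def]
          linarith
      have hD0 : D = 0 := by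
        have hle : |D| ≤ 0 := by
          by_contra hcon
          push_neg at hcon
          have h1 := hmain (|D| / (2*(|U a - U b| + 1))) (by positivity)
          have h2 : (|U a - U b| + 1) * (|D| / (2*(|U a - U b| + 1))) = |D|/2 := by
            field_simp
          rw [h2] at h1
          linarith
        exact abs_eq_zero.mp (le_antisymm hle (abs_nonneg _))
      linarith [hD0]
    -- conclude U = -id on J
    have hUmη : U (-η) = -U η := by
      have h := hJen η hηJ (-η) hmηJ (1/2) ⟨by norm_num, by norm_num⟩
      have harg : (1/2 : ℝ)*η + (1-1/2)*(-η) = 0 := by ring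
      rw [harg, hU0] at h
      linear_combination -2 * h
    have hUηneg : U η < 0 := by
      have := hanti 0 hJ0 η hηJ hηpos
      rwa [hU0] at this
    have hmix : ∀ a ∈ J, ∀ b ∈ J, a < 0 → 0 < b → b * U a = a * U b := by
      intro a ha b hb ha0 hb0
      have hba : 0 < b - a := by linarith
      have hll : b/(b-a) ∈ Icc (0:ℝ) 1 := by
        constructor
        · positivity
        · rw [div_le_one hba]; linarith
      have h := hJen a ha b hb (b/(b-a)) hll
      have harg : (b/(b-a))*a + (1-(b/(b-a)))*b = 0 := by
        field_simp
        ring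
      rw [harg, hU0] at h
      have hl1 : (b/(b-a)) * (b - a) = b := by field_simp
      have hl2 : (1 - (b/(b-a))) * (b - a) = -a := by field_simp; ring
      have h7 : (0:ℝ) = b * U a + (-a) * U b := by
        have h8 : (0:ℝ) * (b-a) = ((b/(b-a)) * U a + (1-(b/(b-a))) * U b) * (b-a) := by
          rw [← h]
        calc (0:ℝ) = 0 * (b-a) := by ring
        _ = ((b/(b-a)) * U a + (1-(b/(b-a))) * U b) * (b-a) := h8
        _ = ((b/(b-a))*(b-a)) * U a + ((1 - (b/(b-a)))*(b-a)) * U b := by ring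
        _ = b * U a + (-a) * U b := by rw [hl1, hl2]
      linear_combination -h7
    have hlin : ∀ a ∈ J, η * U a = U η * a := by
      intro a ha
      rcases lt_trichotomy a 0 with h | h | h
      · have := hmix a ha η hηJ h hηpos
        linear_combination this
      · rw [h, hU0]; ring
      · have := hmix (-η) hmηJ a ha (by linarith) h
        rw [hUmη] at this
        linear_combination this
    have hUη : U η = -η := by
      have h1 := hlin (U η) (hUJ η hηJ)
      rw [hUinv η hηJ] at h1
      have h2 : (U η + η) * (U η - η) = 0 := by linear_combination -h1
      rcases mul_eq_zero.mp h2 with h | h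
      · linarith
      · linarith
    have hfinal : ∀ a ∈ J, U a = -a := by
      intro a ha
      have h1 := hlin a ha
      rw [hUη] at h1
      have h2 : η * U a = η * (-a) := by linear_combination h1
      exact mul_left_cancel₀ hηpos.ne' h2
    -- derive the functional equation
    intro x hx
    obtain ⟨haJ, hXa⟩ := hlogmem x hx
    have hUa : U (Real.log (γ x) - Real.log c) = -(Real.log (γ x) - Real.log c) :=
      hfinal _ haJ
    have hUa' : U (Real.log (γ x) - Real.log c) = Real.log (γ x⁻¹) - Real.log c := by
      simp only [hU_def]
      rw [hXa]
    have hsum : Real.log (γ x) + Real.log (γ x⁻¹) = 2 * Real.log c := by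
      rw [hUa'] at hUa
      linarith
    have hγx : 0 < γ x := hγpos x hx
    have hγxi : 0 < γ x⁻¹ := hγpos _ (inv_pos.mpr hx)
    calc γ x * γ x⁻¹ = Real.exp (Real.log (γ x) + Real.log (γ x⁻¹)) := by
          rw [Real.exp_add, Real.exp_log hγx, Real.exp_log hγxi]
    _ = Real.exp (2 * Real.log c) := by rw [hsum]
    _ = c ^ 2 := by
          rw [show (2:ℝ) * Real.log c = Real.log c + Real.log c by ring, Real.exp_add,
            Real.exp_log hc]
          ring
  · -- backward direction
    intro hfe x hx
    have hxinv : ∀ j, 0 < (x j)⁻¹ := fun j => inv_pos.mpr (hx j)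
    obtain ⟨hMxpos, hMxeq⟩ := hMfacts x hx
    obtain ⟨hMipos, hMieq⟩ := hMfacts (fun j => (x j)⁻¹) hxinv
    have hstep : ∀ j, γ ((x j)⁻¹) = γ 1 ^ 2 / γ (x j) := by
      intro j
      have h := hfe (x j) (hx j)
      rw [eq_div_iff (hγpos _ (hx j)).ne']
      linear_combination h
    have hQ : ∏ j, γ ((x j)⁻¹) ^ p j = γ 1 ^ 2 / ∏ j, γ (x j) ^ p j := by
      calc ∏ j, γ ((x j)⁻¹) ^ p j = ∏ j, (γ 1 ^ 2 / γ (x j)) ^ p j :=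
            Finset.prod_congr rfl (fun j _ => by rw [hstep j])
      _ = ∏ j, ((γ 1 ^ 2) ^ p j / γ (x j) ^ p j) :=
            Finset.prod_congr rfl (fun j _ =>
              Real.div_rpow (by positivity) (hγpos _ (hx j)).le _)
      _ = (∏ j, (γ 1 ^ 2) ^ p j) / (∏ j, γ (x j) ^ p j) := Finset.prod_div_distrib _ _
      _ = (γ 1 ^ 2) ^ (∑ j, p j) / (∏ j, γ (x j) ^ p j) := by
            rw [hpow _ (by positivity) p]
      _ = γ 1 ^ 2 / ∏ j, γ (x j) ^ p j := by rw [hp1, Real.rpow_one]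
    have hMinveq2 : γ ((M x)⁻¹) = ∏ j, γ ((x j)⁻¹) ^ p j := by
      rw [hQ, ← hMxeq]
      have h := hfe (M x) hMxpos
      rw [eq_div_iff (hγpos _ hMxpos).ne']
      linear_combination h
    have hMM : M (fun j => (x j)⁻¹) = (M x)⁻¹ :=
      hinj (mem_Ioi.mpr hMipos) (mem_Ioi.mpr (inv_pos.mpr hMxpos))
        (by rw [hMieq, hMinveq2])
    rw [hMM]
    exact mul_inv_cancel₀ hMxpos.ne'
end

section
/- Let n ≥ 2, let φ : (0,∞) → ℝ be continuous and strictly monotone, and let p₁,…,pₙ > 0 with p₁+…+pₙ = 1. Then the weighted quasiarithmetic mean A_p^{[φ]} satisfies A_p^{[φ]}(x₁,…,xₙ)·A_p^{[φ]}(1/x₁,…,1/xₙ) = 1 for all x₁,…,xₙ > 0 if and only if there exist real numbers a, b with a ≠ 0 such that φ(1/x) = a·φ(x) + b for all x ∈ (0,∞). -/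
open Set Function

lemma aux_dense (t : ℝ) (ht0 : 0 < t) (ht1 : t < 1) (T : Set ℝ)
    (hT : ∀ s₁ ∈ T, ∀ s₂ ∈ T, t*s₁+(1-t)*s₂ ∈ T) :
    ∀ k : ℕ, ∀ a ∈ T, ∀ b ∈ T, a ≤ b → ∀ x ∈ Icc a b,
      ∃ c ∈ T, ∃ d ∈ T, c ≤ x ∧ x ≤ d ∧ d - c ≤ (max t (1-t))^k * (b - a) := by
  intro k
  induction k with
  | zero =>
    intro a ha b hb hab x hx
    exact ⟨a, ha, b, hb, hx.1, hx.2, by norm_num⟩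
  | succ k ih =>
    intro a ha b hb hab x hx
    set r := max t (1-t) with hr
    have hp : t*b+(1-t)*a ∈ T := hT b hb a ha
    have hq : t*a+(1-t)*b ∈ T := hT a ha b hb
    have hrt : t ≤ r := le_max_left _ _
    have hrt' : 1-t ≤ r := le_max_right _ _
    have hba : 0 ≤ b - a := by linarith [hab]
    obtain ⟨a', ha', b', hb', hab', hx1, hx2, hlen⟩ :
        ∃ a' ∈ T, ∃ b' ∈ T, a' ≤ b' ∧ a' ≤ x ∧ x ≤ b' ∧ b' - a' ≤ r*(b-a) := by
      rcases le_total t (1/2) with htt | htt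
      · rcases le_total x (t*b+(1-t)*a) with h1 | h1
        · exact ⟨a, ha, _, hp, by nlinarith, hx.1, h1, by nlinarith⟩
        · rcases le_total x (t*a+(1-t)*b) with h2 | h2
          · exact ⟨_, hp, _, hq, by nlinarith, h1, h2, by nlinarith⟩
          · exact ⟨_, hq, b, hb, by nlinarith, h2, hx.2, by nlinarith⟩
      · rcases le_total x (t*a+(1-t)*b) with h1 | h1
        · exact ⟨a, ha, _, hq, by nlinarith, hx.1, h1, by nlinarith⟩
        · rcases le_total x (t*b+(1-t)*a) with h2 | h2
          · exact ⟨_, hq, _, hp, by nlinarith, h1, h2, by nlinarith⟩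
          · exact ⟨_, hp, b, hb, by nlinarith, h2, hx.2, by nlinarith⟩
    obtain ⟨c, hc, d, hd, h1, h2, h3⟩ := ih a' ha' b' hb' hab' x ⟨hx1, hx2⟩
    refine ⟨c, hc, d, hd, h1, h2, ?_⟩
    have hr0 : (0:ℝ) ≤ r := le_trans (le_of_lt ht0) hrt
    calc d - c ≤ r^k * (b'-a') := h3
      _ ≤ r^k * (r*(b-a)) := mul_le_mul_of_nonneg_left hlen (pow_nonneg hr0 k)
      _ = r^(k+1) * (b-a) := by ring

lemma aux_full (t : ℝ) (ht0 : 0 < t) (ht1 : t < 1) (J : Set ℝ) (hJ : Convex ℝ J)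
    (f : ℝ → ℝ) (hanti : ∀ w₁ ∈ J, ∀ w₂ ∈ J, w₁ ≤ w₂ → f w₂ ≤ f w₁)
    (hkey : ∀ w₁ ∈ J, ∀ w₂ ∈ J, f (t*w₁+(1-t)*w₂) = t * f w₁ + (1-t) * f w₂) :
    ∀ u ∈ J, ∀ v ∈ J, ∀ s ∈ Icc (0:ℝ) 1, f (s*u+(1-s)*v) = s * f u + (1-s) * f v := by
  have memJ : ∀ u ∈ J, ∀ v ∈ J, ∀ s ∈ Icc (0:ℝ) 1, s*u+(1-s)*v ∈ J := by
    intro u hu v hv s hs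
    have := hJ hu hv (a := s) (b := 1-s) hs.1 (by linarith [hs.2]) (by ring)
    simpa [smul_eq_mul] using this
  set T : Set ℝ := {s | s ∈ Icc (0:ℝ) 1 ∧
    ∀ u ∈ J, ∀ v ∈ J, f (s*u+(1-s)*v) = s * f u + (1-s) * f v} with hTdef
  have h0T : (0:ℝ) ∈ T := by
    refine ⟨by norm_num, fun u hu v hv => ?_⟩
    norm_num
  have h1T : (1:ℝ) ∈ T := by
    refine ⟨by norm_num, fun u hu v hv => ?_⟩
    norm_num
  have hclosed : ∀ s₁ ∈ T, ∀ s₂ ∈ T, t*s₁+(1-t)*s₂ ∈ T := by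
    intro s₁ hs₁ s₂ hs₂
    obtain ⟨hI₁, hP₁⟩ := hs₁
    obtain ⟨hI₂, hP₂⟩ := hs₂
    have h1a := hI₁.1
    have h1b := hI₁.2
    have h2a := hI₂.1
    have h2b := hI₂.2
    refine ⟨⟨by nlinarith, by nlinarith⟩, fun u hu v hv => ?_⟩
    have hq₁ : s₁*u+(1-s₁)*v ∈ J := memJ u hu v hv s₁ hI₁
    have hq₂ : s₂*u+(1-s₂)*v ∈ J := memJ u hu v hv s₂ hI₂
    have harg : (t*s₁+(1-t)*s₂)*u + (1-(t*s₁+(1-t)*s₂))*v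
        = t*(s₁*u+(1-s₁)*v) + (1-t)*(s₂*u+(1-s₂)*v) := by ring
    rw [harg, hkey _ hq₁ _ hq₂, hP₁ u hu v hv, hP₂ u hu v hv]
    ring
  suffices h : ∀ u ∈ J, ∀ v ∈ J, u ≤ v → ∀ s ∈ Icc (0:ℝ) 1,
      f (s*u+(1-s)*v) = s * f u + (1-s) * f v by
    intro u hu v hv s hs
    rcases le_total u v with huv | huv
    · exact h u hu v hv huv s hs
    · have h2 := h v hv u hu huv (1-s) ⟨by linarith [hs.2], by linarith [hs.1]⟩
      rw [show s*u+(1-s)*v = (1-s)*v+(1-(1-s))*u by ring]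
      rw [h2]; ring
  intro u hu v hv huv s hs
  have hfvu : f v ≤ f u := hanti u hu v hv huv
  set B := f u - f v with hB
  have hB0 : 0 ≤ B := by linarith
  have hg : ∀ s₁ ∈ Icc (0:ℝ) 1, ∀ s₂ ∈ Icc (0:ℝ) 1, s₁ ≤ s₂ →
      f (s₁*u+(1-s₁)*v) ≤ f (s₂*u+(1-s₂)*v) := by
    intro s₁ hI₁ s₂ hI₂ h12
    have hy₁ : s₁*u+(1-s₁)*v ∈ J := memJ u hu v hv s₁ hI₁
    have hy₂ : s₂*u+(1-s₂)*v ∈ J := memJ u hu v hv s₂ hI₂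
    have hle : s₂*u+(1-s₂)*v ≤ s₁*u+(1-s₁)*v := by nlinarith [mul_nonneg (sub_nonneg.2 h12) (sub_nonneg.2 huv)]
    exact hanti _ hy₂ _ hy₁ hle
  set G := f (s*u+(1-s)*v) with hG
  set H := s * f u + (1-s) * f v with hH
  have hr0 : (0:ℝ) ≤ max t (1-t) := le_trans ht0.le (le_max_left _ _)
  have hr1 : max t (1-t) < 1 := max_lt ht1 (by linarith)
  have key : ∀ ε > (0:ℝ), |G - H| ≤ ε := by
    intro ε hε
    obtain ⟨k, hk⟩ := exists_pow_lt_of_lt_one (show (0:ℝ) < ε/(B+1) from div_pos hε (by linarith)) hr1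
    have hk' : (max t (1-t))^k * (B+1) < ε := (lt_div_iff₀ (by linarith)).mp hk
    obtain ⟨c, hc, d, hd, hcs, hsd, hdc⟩ :=
      aux_dense t ht0 ht1 T hclosed k 0 h0T 1 h1T (by norm_num) s hs
    have gc := hc.2 u hu v hv
    have gd := hd.2 u hu v hv
    have h1 : f (c*u+(1-c)*v) ≤ G := hg c hc.1 s hs hcs
    have h2 : G ≤ f (d*u+(1-d)*v) := hg s hs d hd.1 hsd
    rw [gc] at h1
    rw [gd] at h2
    have hpk : (0:ℝ) ≤ (max t (1-t))^k := pow_nonneg hr0 k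
    rw [abs_le]
    constructor
    · nlinarith [mul_nonneg (sub_nonneg.2 hcs) hB0,
        mul_nonneg (show (0:ℝ) ≤ (max t (1-t))^k - (d-c) by linarith) hB0]
    · nlinarith [mul_nonneg (sub_nonneg.2 hsd) hB0,
        mul_nonneg (show (0:ℝ) ≤ (max t (1-t))^k - (d-c) by linarith) hB0]
  have h0 : |G - H| ≤ 0 :=
    le_of_forall_pos_le_add (fun ε hε => by simpa using key ε hε)
  have := abs_nonneg (G - H)
  have hGH : G - H = 0 := abs_eq_zero.mp (le_antisymm h0 this)
  linarith

/-- Proposition 1 of the paper. For `n ≥ 2`, a continuous strictly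
monotone `φ : (0,∞) → ℝ` and weights `p₁,…,pₙ > 0` summing to `1`, the weighted
quasiarithmetic mean `A_p^{[φ]}(x) = φ⁻¹(∑ⱼ pⱼ φ(xⱼ))` satisfies `A(x)·A(1/x) = 1`
for all positive `x` iff there are `a ≠ 0` and `b` with `φ(1/x) = a·φ(x) + b` for all `x > 0`. -/
theorem stmt_1 (n : ℕ) (hn : 2 ≤ n) (φ : ℝ → ℝ)
    (hφ_cont : ContinuousOn φ (Ioi 0))
    (hφ_mono : StrictMonoOn φ (Ioi 0) ∨ StrictAntiOn φ (Ioi 0))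
    (p : Fin n → ℝ) (hp : ∀ j, 0 < p j) (hp1 : ∑ j, p j = 1)
    (A : (Fin n → ℝ) → ℝ)
    (hA : ∀ x : Fin n → ℝ, (∀ j, 0 < x j) →
      A x = invFunOn φ (Ioi 0) (∑ j, p j * φ (x j))) :
    (∀ x : Fin n → ℝ, (∀ j, 0 < x j) → A x * A (fun j => (x j)⁻¹) = 1) ↔
      ∃ a b : ℝ, a ≠ 0 ∧ ∀ x : ℝ, 0 < x → φ x⁻¹ = a * φ x + b := by
  have hinj : InjOn φ (Ioi 0) := by
    rcases hφ_mono with h | h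
    · exact h.injOn
    · exact h.injOn
  set J := φ '' Ioi 0 with hJdef
  have hJconv : Convex ℝ J := by
    have hpre : IsPreconnected (Ioi (0:ℝ)) := (convex_Ioi (0:ℝ)).isPreconnected
    have himg : IsPreconnected J := hpre.image φ hφ_cont
    exact (isPreconnected_iff_ordConnected.mp himg).convex
  have hmemJ : ∀ x : Fin n → ℝ, (∀ j, 0 < x j) → (∑ j, p j * φ (x j)) ∈ J := by
    intro x hx
    have := hJconv.sum_mem (t := Finset.univ) (fun j _ => (hp j).le) hp1
      (fun j _ => mem_image_of_mem φ (hx j))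
    simpa [smul_eq_mul] using this
  have hinvmem : ∀ y ∈ J, invFunOn φ (Ioi 0) y ∈ Ioi (0:ℝ) := by
    intro y hy
    rcases hy with ⟨c, hc, rfl⟩
    exact Function.invFunOn_mem ⟨c, hc, rfl⟩
  have hinveq : ∀ y ∈ J, φ (invFunOn φ (Ioi 0) y) = y := by
    intro y hy
    rcases hy with ⟨c, hc, rfl⟩
    exact Function.invFunOn_eq ⟨c, hc, rfl⟩
  have hinvφ : ∀ c ∈ Ioi (0:ℝ), invFunOn φ (Ioi 0) (φ c) = c :=
    fun c hc => hinj.leftInvOn_invFunOn hc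
  constructor
  · intro H
    set i0 : Fin n := ⟨0, by omega⟩ with hi0
    set i1 : Fin n := ⟨1, by omega⟩ with hi1
    have hne01 : i1 ≠ i0 := by simp [hi0, hi1, Fin.ext_iff]
    set t := p i0 with htdef
    have ht0 : 0 < t := hp i0
    have ht1 : t < 1 := by
      have hpos : 0 < ∑ j ∈ Finset.univ.erase i0, p j :=
        Finset.sum_pos (fun j _ => hp j) ⟨i1, Finset.mem_erase.2 ⟨hne01, Finset.mem_univ _⟩⟩
      have hsum : p i0 + ∑ j ∈ Finset.univ.erase i0, p j = 1 := by
        rw [Finset.add_sum_erase _ _ (Finset.mem_univ i0)]; exact hp1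
      linarith
    have hsum2 : ∀ y z : ℝ, (∑ j, p j * (if j = i0 then y else z)) = t*y + (1-t)*z := by
      intro y z
      have hterm : ∀ j ∈ Finset.univ, p j * (if j = i0 then y else z)
          = p j * z + (if j = i0 then p j * (y - z) else 0) := by
        intro j _; split_ifs <;> ring
      rw [Finset.sum_congr rfl hterm, Finset.sum_add_distrib,
        Finset.sum_ite_eq' Finset.univ i0 (fun j => p j * (y - z)),
        ← Finset.sum_mul, hp1]
      simp only [Finset.mem_univ, if_true]
      ring
    set f : ℝ → ℝ := fun w => φ ((invFunOn φ (Ioi 0) w)⁻¹) with hfdef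
    have key2 : ∀ c ∈ Ioi (0:ℝ), ∀ d ∈ Ioi (0:ℝ),
        f (t*φ c+(1-t)*φ d) = t * φ c⁻¹ + (1-t) * φ d⁻¹ := by
      intro c hc d hd
      set x : Fin n → ℝ := fun j => if j = i0 then c else d with hx
      have hxpos : ∀ j, 0 < x j := by
        intro j; simp only [hx]; split_ifs; exacts [hc, hd]
      have hxinvpos : ∀ j, 0 < (x j)⁻¹ := fun j => inv_pos.2 (hxpos j)
      have hs1 : ∑ j, p j * φ (x j) = t*φ c+(1-t)*φ d := by
        have hφx : ∀ j, φ (x j) = if j = i0 then φ c else φ d := by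
          intro j; simp only [hx]; split_ifs <;> rfl
        simp_rw [hφx]; exact hsum2 _ _
      have hs2 : ∑ j, p j * φ ((x j)⁻¹) = t*φ c⁻¹+(1-t)*φ d⁻¹ := by
        have hφx : ∀ j, φ ((x j)⁻¹) = if j = i0 then φ c⁻¹ else φ d⁻¹ := by
          intro j; simp only [hx]; split_ifs <;> rfl
        simp_rw [hφx]; exact hsum2 _ _
      have hm1 : (∑ j, p j * φ (x j)) ∈ J := hmemJ x hxpos
      have hm2 : (∑ j, p j * φ ((x j)⁻¹)) ∈ J := hmemJ _ hxinvpos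
      have hH := H x hxpos
      rw [hA x hxpos, hA _ hxinvpos] at hH
      set u := invFunOn φ (Ioi 0) (∑ j, p j * φ (x j)) with hu
      set v := invFunOn φ (Ioi 0) (∑ j, p j * φ ((x j)⁻¹)) with hv
      have humem : u ∈ Ioi (0:ℝ) := hinvmem _ hm1
      have hvphi : φ v = ∑ j, p j * φ ((x j)⁻¹) := hinveq _ hm2
      have hune : u ≠ 0 := ne_of_gt humem
      have hveq : v = u⁻¹ := by
        have h' : u⁻¹ * (u * v) = u⁻¹ * 1 := by rw [hH]
        rwa [← mul_assoc, inv_mul_cancel₀ hune, one_mul, mul_one] at h'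
      have : f (∑ j, p j * φ (x j)) = t*φ c⁻¹+(1-t)*φ d⁻¹ := by
        simp only [hfdef, ← hu, ← hveq, hvphi, hs2]
      rwa [hs1] at this
    have hkeyf : ∀ w₁ ∈ J, ∀ w₂ ∈ J, f (t*w₁+(1-t)*w₂) = t * f w₁ + (1-t) * f w₂ := by
      rintro w₁ ⟨c, hc, rfl⟩ w₂ ⟨d, hd, rfl⟩
      have h1 : f (φ c) = φ c⁻¹ := by simp only [hfdef, hinvφ c hc]
      have h2 : f (φ d) = φ d⁻¹ := by simp only [hfdef, hinvφ d hd]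
      rw [h1, h2]; exact key2 c hc d hd
    have hanti : ∀ w₁ ∈ J, ∀ w₂ ∈ J, w₁ ≤ w₂ → f w₂ ≤ f w₁ := by
      rintro w₁ ⟨c, hc, rfl⟩ w₂ ⟨d, hd, rfl⟩ hle
      have h1 : f (φ c) = φ c⁻¹ := by simp only [hfdef, hinvφ c hc]
      have h2 : f (φ d) = φ d⁻¹ := by simp only [hfdef, hinvφ d hd]
      rw [h1, h2]
      have hci : c⁻¹ ∈ Ioi (0:ℝ) := mem_Ioi.2 (inv_pos.2 hc)
      have hdi : d⁻¹ ∈ Ioi (0:ℝ) := mem_Ioi.2 (inv_pos.2 hd)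
      rcases hφ_mono with hm | hm
      · have hcd : c ≤ d := (hm.le_iff_le hc hd).mp hle
        have : d⁻¹ ≤ c⁻¹ := by
          rw [inv_le_inv₀ (show (0:ℝ) < d from hd) (show (0:ℝ) < c from hc)]
          exact hcd
        exact (hm.le_iff_le hdi hci).mpr this
      · have hcd : d ≤ c := (hm.le_iff_ge hc hd).mp hle
        have : c⁻¹ ≤ d⁻¹ := by
          rw [inv_le_inv₀ (show (0:ℝ) < c from hc) (show (0:ℝ) < d from hd)]
          exact hcd
        exact (hm.le_iff_ge hdi hci).mpr this
    have FULL := aux_full t ht0 ht1 J hJconv f hanti hkeyf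
    have main : ∀ u₀ ∈ J, ∀ v₀ ∈ J, u₀ < v₀ → f u₀ ≠ f v₀ →
        ∃ a b : ℝ, a ≠ 0 ∧ ∀ x : ℝ, 0 < x → φ x⁻¹ = a * φ x + b := by
      intro u₀ hu₀ v₀ hv₀ hlt hfne
      set a := (f v₀ - f u₀)/(v₀ - u₀) with hadef
      set b := f u₀ - a*u₀ with hbdef
      have hvu : v₀ - u₀ ≠ 0 := sub_ne_zero.2 (ne_of_gt hlt)
      have hfu₀ : f u₀ = a*u₀ + b := by rw [hbdef]; ring
      have ha' : a * (v₀ - u₀) = f v₀ - f u₀ := div_mul_cancel₀ _ hvu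
      have hfv₀ : f v₀ = a*v₀ + b := by
        have hexp : a*(v₀-u₀) = a*v₀ - a*u₀ := by ring
        rw [hbdef]; linarith
      have hane : a ≠ 0 := div_ne_zero (sub_ne_zero.2 (Ne.symm hfne)) hvu
      refine ⟨a, b, hane, ?_⟩
      intro x hx
      have hw : φ x ∈ J := mem_image_of_mem φ hx
      have hfx : f (φ x) = φ x⁻¹ := by simp only [hfdef, hinvφ x hx]
      rw [← hfx]
      set w := φ x with hwdef
      rcases le_or_gt w u₀ with hcase | hcase
      · rcases eq_or_lt_of_le hcase with heq | hlt2
        · rw [heq]; exact hfu₀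
        · set s := (v₀-u₀)/(v₀-w) with hsdef
          have hvw : 0 < v₀ - w := by linarith
          have hs0 : 0 < s := div_pos (by linarith) hvw
          have hs1 : s ≤ 1 := by rw [div_le_one hvw]; linarith
          have harg : s*w + (1-s)*v₀ = u₀ := by
            rw [hsdef]; field_simp; ring
          have hfull := FULL w hw v₀ hv₀ s ⟨hs0.le, hs1⟩
          rw [harg] at hfull
          have h5 : s * f w = s * (a*w+b) := by
            linear_combination -hfull + hfu₀ - (1-s)*hfv₀ - a*harg
          exact mul_left_cancel₀ (ne_of_gt hs0) h5
      · rcases le_or_gt w v₀ with hcase2 | hcase2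
        · set s := (v₀-w)/(v₀-u₀) with hsdef
          have hvu' : 0 < v₀-u₀ := by linarith
          have hs0 : 0 ≤ s := div_nonneg (by linarith) hvu'.le
          have hs1 : s ≤ 1 := by rw [div_le_one hvu']; linarith
          have harg : s*u₀+(1-s)*v₀ = w := by rw [hsdef]; field_simp; ring
          have hfull := FULL u₀ hu₀ v₀ hv₀ s ⟨hs0, hs1⟩
          rw [harg] at hfull
          rw [hfull, hfu₀, hfv₀]
          linear_combination a*harg
        · set s := (w-v₀)/(w-u₀) with hsdef
          have hwu : 0 < w - u₀ := by linarith
          have hs0 : 0 < s := div_pos (by linarith) hwu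
          have hs1 : s < 1 := by rw [div_lt_one hwu]; linarith
          have harg : s*u₀+(1-s)*w = v₀ := by rw [hsdef]; field_simp; ring
          have hfull := FULL u₀ hu₀ w hw s ⟨hs0.le, hs1.le⟩
          rw [harg] at hfull
          have h5 : (1-s) * f w = (1-s) * (a*w+b) := by
            linear_combination -hfull - s*hfu₀ + hfv₀ - a*harg
          exact mul_left_cancel₀ (by intro h0; rw [sub_eq_zero] at h0; exact absurd h0.symm (ne_of_lt hs1)) h5
    have h1J : φ 1 ∈ J := mem_image_of_mem φ (by norm_num : (1:ℝ) ∈ Ioi (0:ℝ))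
    have h2J : φ 2 ∈ J := mem_image_of_mem φ (by norm_num : (2:ℝ) ∈ Ioi (0:ℝ))
    have hfeq1 : f (φ 1) = φ 1⁻¹ := by
      simp only [hfdef, hinvφ 1 (by norm_num : (1:ℝ) ∈ Ioi (0:ℝ))]
    have hfeq2 : f (φ 2) = φ 2⁻¹ := by
      simp only [hfdef, hinvφ 2 (by norm_num : (2:ℝ) ∈ Ioi (0:ℝ))]
    have hne12 : φ 1 ≠ φ 2 := by
      intro h
      have := hinj (by norm_num : (1:ℝ) ∈ Ioi (0:ℝ)) (by norm_num : (2:ℝ) ∈ Ioi (0:ℝ)) h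
      norm_num at this
    have hfne : f (φ 1) ≠ f (φ 2) := by
      rw [hfeq1, hfeq2]
      intro h
      have := hinj (by norm_num : (1:ℝ)⁻¹ ∈ Ioi (0:ℝ)) (by norm_num : (2:ℝ)⁻¹ ∈ Ioi (0:ℝ)) h
      norm_num at this
    rcases lt_or_gt_of_ne hne12 with hlt | hlt
    · exact main (φ 1) h1J (φ 2) h2J hlt hfne
    · exact main (φ 2) h2J (φ 1) h1J hlt (Ne.symm hfne)
  · rintro ⟨a, b, ha, hab⟩ x hx
    have hmem : (∑ j, p j * φ (x j)) ∈ J := hmemJ x hx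
    set u := invFunOn φ (Ioi 0) (∑ j, p j * φ (x j)) with hu
    have humem : u ∈ Ioi (0:ℝ) := hinvmem _ hmem
    have hφu : φ u = ∑ j, p j * φ (x j) := hinveq _ hmem
    have hxinv : ∀ j, 0 < (x j)⁻¹ := fun j => inv_pos.2 (hx j)
    have hsum' : ∑ j, p j * φ ((x j)⁻¹) = a * (∑ j, p j * φ (x j)) + b := by
      calc ∑ j, p j * φ ((x j)⁻¹) = ∑ j, (a*(p j * φ (x j)) + b * p j) :=
            Finset.sum_congr rfl (fun j _ => by rw [hab _ (hx j)]; ring)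
        _ = a * (∑ j, p j * φ (x j)) + b * (∑ j, p j) := by
            rw [Finset.sum_add_distrib, ← Finset.mul_sum, ← Finset.mul_sum]
        _ = a * (∑ j, p j * φ (x j)) + b := by rw [hp1, mul_one]
    have hφuinv : φ u⁻¹ = a * (∑ j, p j * φ (x j)) + b := by
      rw [hab u humem, hφu]
    have huinvmem : u⁻¹ ∈ Ioi (0:ℝ) := mem_Ioi.2 (inv_pos.2 humem)
    have hAx : A x = u := hA x hx
    have hAxi : A (fun j => (x j)⁻¹) = u⁻¹ := by
      rw [hA _ hxinv]
      rw [show (∑ j, p j * φ ((x j)⁻¹)) = φ u⁻¹ by rw [hφuinv, hsum']]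
      exact hinvφ _ huinvmem
    rw [hAx, hAxi, mul_inv_cancel₀ (ne_of_gt humem)]
end

section
/- Let n ≥ 2, let φ : ℝ → ℝ be continuous and strictly monotone, and let p₁,…,pₙ > 0 with p₁+…+pₙ = 1. Then the weighted quasiarithmetic mean A_p^{[φ]} : ℝⁿ → ℝ is odd (i.e. A_p^{[φ]}(-t₁,…,-tₙ) = -A_p^{[φ]}(t₁,…,tₙ) for all t₁,…,tₙ ∈ ℝ) if and only if the function φ - φ(0) is odd, i.e. φ(-t) + φ(t) = 2·φ(0) for all t ∈ ℝ. -/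
open Function

private lemma aux_tendsto_inv {φ : ℝ → ℝ} (hφ : StrictMono φ ∨ StrictAnti φ)
    {x : ℕ → ℝ} {a : ℝ}
    (H : Filter.Tendsto (fun k => φ (x k)) Filter.atTop (nhds (φ a))) :
    Filter.Tendsto x Filter.atTop (nhds a) := by
  rcases hφ with h | h
  · rw [tendsto_order]
    constructor
    · intro b hb
      filter_upwards [(tendsto_order.1 H).1 (φ b) (h hb)] with k hk
      exact h.lt_iff_lt.1 hk
    · intro b hb
      filter_upwards [(tendsto_order.1 H).2 (φ b) (h hb)] with k hk
      exact h.lt_iff_lt.1 hk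
  · rw [tendsto_order]
    constructor
    · intro b hb
      filter_upwards [(tendsto_order.1 H).2 (φ b) (h hb)] with k hk
      exact h.lt_iff_gt.1 hk
    · intro b hb
      filter_upwards [(tendsto_order.1 H).1 (φ b) (h hb)] with k hk
      exact h.lt_iff_gt.1 hk

private lemma aux_mem_range {φ : ℝ → ℝ} (hc : Continuous φ) {a b s : ℝ}
    (h1 : φ a ≤ s) (h2 : s ≤ φ b) : s ∈ Set.range φ :=
  intermediate_value_univ a b hc ⟨h1, h2⟩

private lemma aux_combo_mem {φ : ℝ → ℝ} (hc : Continuous φ) (a b : ℝ) {α : ℝ}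
    (h0 : 0 ≤ α) (h1 : α ≤ 1) :
    α * φ a + (1 - α) * φ b ∈ Set.range φ := by
  rcases le_total (φ a) (φ b) with h | h
  · exact aux_mem_range hc (a := a) (b := b) (by nlinarith) (by nlinarith)
  · exact aux_mem_range hc (a := b) (b := a) (by nlinarith) (by nlinarith)

private lemma aux_sum_mem {n : ℕ} (hn : 2 ≤ n) {φ : ℝ → ℝ} (hc : Continuous φ)
    (p : Fin n → ℝ) (hp : ∀ j, 0 < p j) (hp1 : ∑ j, p j = 1) (c : Fin n → ℝ) :
    (∑ j, p j * φ (c j)) ∈ Set.range φ := by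
  have hne : (Finset.univ : Finset (Fin n)).Nonempty :=
    ⟨⟨0, by omega⟩, Finset.mem_univ _⟩
  obtain ⟨jmin, -, hmin⟩ := Finset.exists_min_image Finset.univ (fun j => φ (c j)) hne
  obtain ⟨jmax, -, hmax⟩ := Finset.exists_max_image Finset.univ (fun j => φ (c j)) hne
  refine aux_mem_range hc (a := c jmin) (b := c jmax) ?_ ?_
  · calc φ (c jmin) = (∑ j, p j) * φ (c jmin) := by rw [hp1, one_mul]
      _ = ∑ j, p j * φ (c jmin) := by rw [Finset.sum_mul]
      _ ≤ ∑ j, p j * φ (c j) :=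
          Finset.sum_le_sum fun j _ =>
            mul_le_mul_of_nonneg_left (hmin j (Finset.mem_univ j)) (hp j).le
  · calc (∑ j, p j * φ (c j)) ≤ ∑ j, p j * φ (c jmax) :=
          Finset.sum_le_sum fun j _ =>
            mul_le_mul_of_nonneg_left (hmax j (Finset.mem_univ j)) (hp j).le
      _ = (∑ j, p j) * φ (c jmax) := by rw [Finset.sum_mul]
      _ = φ (c jmax) := by rw [hp1, one_mul]

/-- Proposition 2 of the paper. For `n ≥ 2`, a continuous strictly
monotone `φ : ℝ → ℝ` and weights `p₁,…,pₙ > 0` summing to `1`, the weighted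
quasiarithmetic mean `A_p^{[φ]}(t) = φ⁻¹(∑ⱼ pⱼ φ(tⱼ))` is odd iff `φ - φ(0)` is odd,
i.e. `φ(-t) + φ(t) = 2·φ(0)` for all `t`. -/
theorem stmt_2 (n : ℕ) (hn : 2 ≤ n) (φ : ℝ → ℝ)
    (hφ_cont : Continuous φ)
    (hφ_mono : StrictMono φ ∨ StrictAnti φ)
    (p : Fin n → ℝ) (hp : ∀ j, 0 < p j) (hp1 : ∑ j, p j = 1)
    (A : (Fin n → ℝ) → ℝ)
    (hA : ∀ t : Fin n → ℝ, A t = invFun φ (∑ j, p j * φ (t j))) :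
    (∀ t : Fin n → ℝ, A (fun j => -(t j)) = -A t) ↔
      (∀ t : ℝ, φ (-t) + φ t = 2 * φ 0) := by
  have hinj : Injective φ := by
    rcases hφ_mono with h | h
    exacts [h.injective, h.injective]
  have hleft : ∀ x, invFun φ (φ x) = x := fun x => leftInverse_invFun hinj x
  have hsum : ∀ c : Fin n → ℝ, (∑ j, p j * φ (c j)) ∈ Set.range φ :=
    aux_sum_mem hn hφ_cont p hp hp1
  have hφA : ∀ c : Fin n → ℝ, φ (A c) = ∑ j, p j * φ (c j) := by
    intro c; rw [hA]; exact invFun_eq (hsum c)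
  constructor
  · -- A odd ⟹ functional equation
    intro hodd
    set h : ℝ → ℝ := fun u => φ (-(invFun φ u)) with hh
    have hphi : ∀ x, h (φ x) = φ (-x) := by
      intro x; simp only [hh, hleft x]
    have key : ∀ t : Fin n → ℝ,
        ∑ j, p j * φ (-(t j)) = h (∑ j, p j * φ (t j)) := by
      intro t
      have h1 : φ (A (fun j => -(t j))) = ∑ j, p j * φ (-(t j)) := hφA _
      have h2 : φ (-(A t)) = h (∑ j, p j * φ (t j)) := by
        simp only [hh, hA t]
      rw [← h1, hodd t, h2]
    -- index setup
    set i0 : Fin n := ⟨0, by omega⟩ with hi0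
    set i1 : Fin n := ⟨1, by omega⟩ with hi1
    have hne01 : i0 ≠ i1 := by
      simp [hi0, hi1, Fin.ext_iff]
    have hp0 : 0 < p i0 := hp i0
    have hp01 : p i0 < 1 := by
      have hsub : ∑ j ∈ ({i0, i1} : Finset (Fin n)), p j ≤ ∑ j, p j :=
        Finset.sum_le_sum_of_subset_of_nonneg (Finset.subset_univ _)
          (fun j _ _ => (hp j).le)
      rw [Finset.sum_pair hne01, hp1] at hsub
      have := hp i1
      linarith
    -- sums with one coordinate distinguished
    have hsum_if : ∀ a b : ℝ,
        ∑ j, p j * φ (if j = i0 then a else b) = p i0 * φ a + (1 - p i0) * φ b := by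
      intro a b
      have hps : ∑ j ∈ Finset.univ.erase i0, p j = 1 - p i0 := by
        have h3 := Finset.add_sum_erase Finset.univ p (Finset.mem_univ i0)
        rw [hp1] at h3
        linarith
      rw [← Finset.add_sum_erase _ _ (Finset.mem_univ i0), if_pos rfl]
      congr 1
      rw [Finset.sum_congr rfl (fun j hj => by
        rw [if_neg (Finset.ne_of_mem_erase hj)]), ← Finset.sum_mul, hps]
    -- base step: property holds for α = p i0
    have hP0 : ∀ t : ℝ,
        h (p i0 * φ t + (1 - p i0) * φ (-t)) = p i0 * φ (-t) + (1 - p i0) * φ t := by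
      intro t
      have hk := key (fun j => if j = i0 then t else -t)
      have e1 : ∀ j : Fin n, -(if j = i0 then t else -t) = if j = i0 then -t else t := by
        intro j; split_ifs <;> ring
      rw [Finset.sum_congr rfl (fun j _ => by rw [e1 j]), hsum_if, hsum_if] at hk
      exact hk.symm
    -- inductive closure step
    have hstep : ∀ α : ℝ, 0 ≤ α → α ≤ 1 →
        (∀ t : ℝ, h (α * φ t + (1 - α) * φ (-t)) = α * φ (-t) + (1 - α) * φ t) →
        ∀ t : ℝ,
          h ((p i0 * α + (1 - p i0) * (1 - α)) * φ t
              + (1 - (p i0 * α + (1 - p i0) * (1 - α))) * φ (-t))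
            = (p i0 * α + (1 - p i0) * (1 - α)) * φ (-t)
              + (1 - (p i0 * α + (1 - p i0) * (1 - α))) * φ t := by
      intro α h0 h1 hPα t
      obtain ⟨r, hr⟩ := aux_combo_mem hφ_cont t (-t) h0 h1
      have hr' : φ (-r) = α * φ (-t) + (1 - α) * φ t := by
        rw [← hphi r, hr]; exact hPα t
      have hstep0 := hP0 r
      rw [hr, hr'] at hstep0
      rw [show (p i0 * α + (1 - p i0) * (1 - α)) * φ t
            + (1 - (p i0 * α + (1 - p i0) * (1 - α))) * φ (-t)
          = p i0 * (α * φ t + (1 - α) * φ (-t))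
            + (1 - p i0) * (α * φ (-t) + (1 - α) * φ t) from by ring,
        show (p i0 * α + (1 - p i0) * (1 - α)) * φ (-t)
            + (1 - (p i0 * α + (1 - p i0) * (1 - α))) * φ t
          = p i0 * (α * φ (-t) + (1 - α) * φ t)
            + (1 - p i0) * (α * φ t + (1 - α) * φ (-t)) from by ring]
      exact hstep0
    -- the sequence of weights
    set f : ℝ → ℝ := fun x => p i0 * x + (1 - p i0) * (1 - x) with hf
    set a : ℕ → ℝ := fun k => f^[k] (p i0) with ha
    have hrec : ∀ k, a (k + 1) = p i0 * a k + (1 - p i0) * (1 - a k) := by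
      intro k
      simp only [ha, Function.iterate_succ_apply', hf]
    have hprop : ∀ k, 0 ≤ a k ∧ a k ≤ 1 ∧
        (∀ t : ℝ, h (a k * φ t + (1 - a k) * φ (-t)) = a k * φ (-t) + (1 - a k) * φ t) := by
      intro k
      induction k with
      | zero =>
        refine ⟨hp0.le, hp01.le, ?_⟩
        simpa only [ha, Function.iterate_zero, id_eq] using hP0
      | succ k ih =>
        obtain ⟨h0, h1, hPk⟩ := ih
        refine ⟨?_, ?_, ?_⟩
        · rw [hrec]; nlinarith
        · rw [hrec]; nlinarith
        · intro t
          rw [hrec]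
          exact hstep (a k) h0 h1 hPk t
    have hform : ∀ k, a k = 1 / 2 + (2 * p i0 - 1) ^ k * (p i0 - 1 / 2) := by
      intro k
      induction k with
      | zero => simp [ha]
      | succ k ih =>
        rw [hrec, ih, pow_succ]
        ring
    have htend : Filter.Tendsto a Filter.atTop (nhds (1 / 2 : ℝ)) := by
      have habs : |2 * p i0 - 1| < 1 := by
        rw [abs_lt]; constructor <;> linarith
      have h2 := tendsto_pow_atTop_nhds_zero_of_abs_lt_one habs
      have h3 : Filter.Tendsto (fun k : ℕ => 1 / 2 + (2 * p i0 - 1) ^ k * (p i0 - 1 / 2))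
          Filter.atTop (nhds (1 / 2 + 0 * (p i0 - 1 / 2))) :=
        tendsto_const_nhds.add (h2.mul tendsto_const_nhds)
      rw [show a = fun k => 1 / 2 + (2 * p i0 - 1) ^ k * (p i0 - 1 / 2) from funext hform]
      simpa using h3
    -- conclude the functional equation
    intro t
    have hex : ∀ k, ∃ r : ℝ, φ r = a k * φ t + (1 - a k) * φ (-t) := by
      intro k
      exact aux_combo_mem hφ_cont t (-t) (hprop k).1 (hprop k).2.1
    choose r hrk using hex
    have hneg : ∀ k, φ (-(r k)) = a k * φ (-t) + (1 - a k) * φ t := by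
      intro k
      rw [← hphi (r k), hrk k]
      exact (hprop k).2.2 t
    obtain ⟨r0, hr0⟩ := aux_combo_mem hφ_cont t (-t)
      (by norm_num : (0:ℝ) ≤ 1 / 2) (by norm_num : (1:ℝ) / 2 ≤ 1)
    have htu : Filter.Tendsto (fun k => φ (r k)) Filter.atTop (nhds (φ r0)) := by
      rw [hr0]
      simp only [hrk]
      exact (htend.mul tendsto_const_nhds).add
        ((tendsto_const_nhds.sub htend).mul tendsto_const_nhds)
    have hrt : Filter.Tendsto r Filter.atTop (nhds r0) := aux_tendsto_inv hφ_mono htu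
    have htneg : Filter.Tendsto (fun k => φ (-(r k))) Filter.atTop (nhds (φ (-r0))) :=
      (hφ_cont.tendsto _).comp hrt.neg
    have htneg' : Filter.Tendsto (fun k => φ (-(r k))) Filter.atTop
        (nhds ((φ t + φ (-t)) - φ r0)) := by
      have e : ∀ k, φ (-(r k)) = (φ t + φ (-t)) - φ (r k) := by
        intro k
        rw [hrk k, hneg k]; ring
      simp only [e]
      exact tendsto_const_nhds.sub htu
    have heq : φ (-r0) = (φ t + φ (-t)) - φ r0 := tendsto_nhds_unique htneg htneg'
    have heq2 : φ (-r0) = φ r0 := by rw [heq, hr0]; ring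
    have hr00 : r0 = 0 := by
      have := hinj heq2
      linarith
    rw [hr00] at hr0
    linarith [hr0]
  · -- functional equation ⟹ A odd
    intro hfe t
    obtain ⟨x, hx⟩ := hsum t
    have hAx : A t = x := by rw [hA, ← hx, hleft]
    have hs' : ∑ j, p j * φ (-(t j)) = φ (-x) := by
      calc ∑ j, p j * φ (-(t j))
          = ∑ j, (p j * (2 * φ 0) - p j * φ (t j)) := by
            refine Finset.sum_congr rfl fun j _ => ?_
            rw [show φ (-(t j)) = 2 * φ 0 - φ (t j) from by linarith [hfe (t j)]]
            ring
        _ = (∑ j, p j) * (2 * φ 0) - ∑ j, p j * φ (t j) := by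
            rw [Finset.sum_sub_distrib, Finset.sum_mul]
        _ = 2 * φ 0 - φ x := by rw [hp1, hx, one_mul]
        _ = φ (-x) := by linarith [hfe x]
    rw [hA, hAx]
    rw [hs', hleft]
end

section
/- Let n ≥ 2, let I ⊆ ℝ be an interval, let φ, ψ : I → ℝ be continuous and strictly monotone, and let p₁,…,pₙ > 0 with p₁+…+pₙ = 1. Then the weighted quasiarithmetic means A_p^{[ψ]} and A_p^{[φ]} coincide (as functions on Iⁿ) if and only if there exist real numbers a, b with a ≠ 0 such that ψ = a·φ + b on I. -/
open Set Function

private lemma img_ordConn {I : Set ℝ} (hIc : I.OrdConnected) {χ : ℝ → ℝ}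
    (hc : ContinuousOn χ I) : (χ '' I).OrdConnected :=
  (hIc.isPreconnected.image χ hc).ordConnected

private lemma sum_mem_img {n : ℕ} (hn : 0 < n) {I : Set ℝ} (hIc : I.OrdConnected)
    {χ : ℝ → ℝ} (hc : ContinuousOn χ I) (p : Fin n → ℝ) (hp : ∀ j, 0 < p j)
    (hp1 : ∑ j, p j = 1) (x : Fin n → ℝ) (hx : ∀ j, x j ∈ I) :
    ∑ j, p j * χ (x j) ∈ χ '' I := by
  have hne : (Finset.univ : Finset (Fin n)).Nonempty := ⟨⟨0, hn⟩, Finset.mem_univ _⟩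
  obtain ⟨j₀, -, hj₀⟩ := Finset.exists_min_image Finset.univ (fun j => χ (x j)) hne
  obtain ⟨j₁, -, hj₁⟩ := Finset.exists_max_image Finset.univ (fun j => χ (x j)) hne
  have hlo : χ (x j₀) ≤ ∑ j, p j * χ (x j) := by
    calc χ (x j₀) = ∑ j, p j * χ (x j₀) := by rw [← Finset.sum_mul, hp1, one_mul]
    _ ≤ ∑ j, p j * χ (x j) := Finset.sum_le_sum fun j _ =>
        mul_le_mul_of_nonneg_left (hj₀ j (Finset.mem_univ j)) (hp j).le
  have hhi : ∑ j, p j * χ (x j) ≤ χ (x j₁) := by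
    calc ∑ j, p j * χ (x j) ≤ ∑ j, p j * χ (x j₁) := Finset.sum_le_sum fun j _ =>
        mul_le_mul_of_nonneg_left (hj₁ j (Finset.mem_univ j)) (hp j).le
    _ = χ (x j₁) := by rw [← Finset.sum_mul, hp1, one_mul]
  exact (img_ordConn hIc hc).out ⟨x j₀, hx j₀, rfl⟩ ⟨x j₁, hx j₁, rfl⟩ ⟨hlo, hhi⟩

private lemma collinear_key {I : Set ℝ} (hIc : I.OrdConnected)
    {φ ψ : ℝ → ℝ} (hφ_cont : ContinuousOn φ I) (hψ_cont : ContinuousOn ψ I)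
    (hφ_mono : StrictMonoOn φ I ∨ StrictAntiOn φ I)
    {q : ℝ} (hq0 : 0 < q) (hq1 : q < 1)
    (hm : ∀ u ∈ I, ∀ v ∈ I, ∃ w ∈ I,
      φ w = q * φ u + (1 - q) * φ v ∧ ψ w = q * ψ u + (1 - q) * ψ v)
    {s t : ℝ} (hs : s ∈ I) (ht : t ∈ I) (hst : s < t) :
    ∀ c ∈ Icc s t, (ψ t - ψ s) * (φ c - φ s) = (ψ c - ψ s) * (φ t - φ s) := by
  have hsub : Icc s t ⊆ I := hIc.out hs ht
  set S : Set ℝ := {c | c ∈ Icc s t ∧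
    (ψ t - ψ s) * (φ c - φ s) = (ψ c - ψ s) * (φ t - φ s)} with hS
  have hScl : IsClosed S := by
    have : S = Icc s t ∩ (fun c => (ψ t - ψ s) * (φ c - φ s) -
        (ψ c - ψ s) * (φ t - φ s)) ⁻¹' {0} := by
      ext c
      simp only [hS, mem_setOf_eq, mem_inter_iff, mem_preimage, mem_singleton_iff,
        sub_eq_zero]
    rw [this]
    refine ContinuousOn.preimage_isClosed_of_isClosed ?_ isClosed_Icc isClosed_singleton
    exact (continuousOn_const.mul ((hφ_cont.mono hsub).sub continuousOn_const)).sub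
      (((hψ_cont.mono hsub).sub continuousOn_const).mul continuousOn_const)
  have hsS : s ∈ S := ⟨⟨le_rfl, hst.le⟩, by ring⟩
  have htS : t ∈ S := ⟨⟨hst.le, le_rfl⟩, by ring⟩
  have hcombo : ∀ a ∈ S, ∀ b ∈ S, a < b → ∃ γ ∈ S, a < γ ∧ γ < b := by
    intro a haS b hbS hab
    have haI : a ∈ I := hsub haS.1
    have hbI : b ∈ I := hsub hbS.1
    obtain ⟨w, hwI, hwφ, hwψ⟩ := hm b hbI a haI
    have hwmid : a < w ∧ w < b := by
      rcases hφ_mono with hmono | hanti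
      · have h1 : φ a < φ b := hmono haI hbI hab
        have h2 : φ a < φ w := by rw [hwφ]; nlinarith
        have h3 : φ w < φ b := by rw [hwφ]; nlinarith
        constructor
        · by_contra hle
          exact absurd (hmono.monotoneOn hwI haI (not_lt.1 hle)) (not_le.2 h2)
        · by_contra hle
          exact absurd (hmono.monotoneOn hbI hwI (not_lt.1 hle)) (not_le.2 h3)
      · have h1 : φ b < φ a := hanti haI hbI hab
        have h2 : φ w < φ a := by rw [hwφ]; nlinarith
        have h3 : φ b < φ w := by rw [hwφ]; nlinarith
        constructor
        · by_contra hle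
          exact absurd (hanti.antitoneOn hwI haI (not_lt.1 hle)) (not_le.2 h2)
        · by_contra hle
          exact absurd (hanti.antitoneOn hbI hwI (not_lt.1 hle)) (not_le.2 h3)
    refine ⟨w, ⟨⟨haS.1.1.trans hwmid.1.le, hwmid.2.le.trans hbS.1.2⟩, ?_⟩, hwmid.1, hwmid.2⟩
    have ha0 := haS.2
    have hb0 := hbS.2
    rw [hwφ, hwψ]
    linear_combination q * hb0 + (1 - q) * ha0
  intro c hc
  by_contra hne
  have hcS : c ∉ S := fun hcs => hne hcs.2
  have hsc : s < c := lt_of_le_of_ne hc.1 (fun e => hcS (e ▸ hsS))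
  have hct : c < t := lt_of_le_of_ne hc.2 (fun e => hcS (e.symm ▸ htS))
  set A : Set ℝ := S ∩ Icc s c with hA
  set B : Set ℝ := S ∩ Icc c t with hB
  have hAcl : IsClosed A := hScl.inter isClosed_Icc
  have hBcl : IsClosed B := hScl.inter isClosed_Icc
  have hAne : A.Nonempty := ⟨s, hsS, le_rfl, hsc.le⟩
  have hBne : B.Nonempty := ⟨t, htS, hct.le, le_rfl⟩
  have hAbd : BddAbove A := BddAbove.mono inter_subset_right bddAbove_Icc
  have hBbd : BddBelow B := BddBelow.mono inter_subset_right bddBelow_Icc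
  have hαA : sSup A ∈ A := hAcl.csSup_mem hAne hAbd
  have hβB : sInf B ∈ B := hBcl.csInf_mem hBne hBbd
  have hαc : sSup A < c := lt_of_le_of_ne hαA.2.2 (fun e => hcS (e ▸ hαA.1))
  have hcβ : c < sInf B := lt_of_le_of_ne hβB.2.1 (fun e => hcS (e.symm ▸ hβB.1))
  obtain ⟨γ, hγS, hαγ, hγβ⟩ := hcombo _ hαA.1 _ hβB.1 (hαc.trans hcβ)
  rcases le_or_gt γ c with hγc | hcγ
  · have : γ ∈ A := ⟨hγS, hαA.2.1.trans hαγ.le, hγc⟩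
    exact absurd (le_csSup hAbd this) (not_le.2 hαγ)
  · have : γ ∈ B := ⟨hγS, hcγ.le, hγβ.le.trans hβB.2.2⟩
    exact absurd (csInf_le hBbd this) (not_le.2 hγβ)

/-- Remark 4 of the paper, equality of generators. For `n ≥ 2`,
an interval `I ⊆ ℝ`, continuous strictly monotone `φ, ψ : I → ℝ` and weights
`p₁,…,pₙ > 0` summing to `1`, we have `A_p^{[ψ]} = A_p^{[φ]}` on `Iⁿ` iff
`ψ = a·φ + b` on `I` for some `a ≠ 0` and `b`. -/
theorem stmt_10 (n : ℕ) (hn : 2 ≤ n) (I : Set ℝ) (hIc : I.OrdConnected)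
    (φ ψ : ℝ → ℝ)
    (hφ_cont : ContinuousOn φ I) (hψ_cont : ContinuousOn ψ I)
    (hφ_mono : StrictMonoOn φ I ∨ StrictAntiOn φ I)
    (hψ_mono : StrictMonoOn ψ I ∨ StrictAntiOn ψ I)
    (p : Fin n → ℝ) (hp : ∀ j, 0 < p j) (hp1 : ∑ j, p j = 1) :
    (∀ x : Fin n → ℝ, (∀ j, x j ∈ I) →
        invFunOn ψ I (∑ j, p j * ψ (x j)) = invFunOn φ I (∑ j, p j * φ (x j))) ↔
      ∃ a b : ℝ, a ≠ 0 ∧ ∀ x ∈ I, ψ x = a * φ x + b := by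
  haveI : NeZero n := ⟨by omega⟩
  have hn0 : 0 < n := by omega
  have hφinj : InjOn φ I := hφ_mono.elim (·.injOn) (·.injOn)
  have hψinj : InjOn ψ I := hψ_mono.elim (·.injOn) (·.injOn)
  set q := p 0 with hqdef
  have hq0 : 0 < q := hp 0
  have herase : ∑ j ∈ Finset.univ.erase 0, p j = 1 - q := by
    have h := Finset.add_sum_erase Finset.univ p (Finset.mem_univ (0 : Fin n))
    rw [hp1] at h
    linarith
  have hq1 : q < 1 := by
    have hj₁ : (⟨1, by omega⟩ : Fin n) ∈ Finset.univ.erase 0 :=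
      Finset.mem_erase.2 ⟨by simp [Fin.ext_iff], Finset.mem_univ _⟩
    have := Finset.single_le_sum (f := p) (fun i _ => (hp i).le) hj₁
    have := hp (⟨1, by omega⟩ : Fin n)
    linarith [herase]
  have hsum2 : ∀ (χ : ℝ → ℝ) (u v : ℝ),
      ∑ j, p j * χ (if j = 0 then u else v) = q * χ u + (1 - q) * χ v := by
    intro χ u v
    rw [← Finset.add_sum_erase _ _ (Finset.mem_univ (0 : Fin n))]
    have h1 : ∑ j ∈ Finset.univ.erase 0, p j * χ (if j = 0 then u else v)
        = ∑ j ∈ Finset.univ.erase 0, p j * χ v :=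
      Finset.sum_congr rfl (fun j hj => by rw [if_neg (Finset.mem_erase.1 hj).1])
    rw [h1, ← Finset.sum_mul, herase, if_pos rfl]
  constructor
  · -- forward direction
    intro hEq
    have hm : ∀ u ∈ I, ∀ v ∈ I, ∃ w ∈ I,
        φ w = q * φ u + (1 - q) * φ v ∧ ψ w = q * ψ u + (1 - q) * ψ v := by
      intro u hu v hv
      set x : Fin n → ℝ := fun j => if j = 0 then u else v with hx
      have hxI : ∀ j, x j ∈ I := fun j => by
        by_cases hj : j = 0 <;> simp [hx, hj, hu, hv]
      have hφs := sum_mem_img hn0 hIc hφ_cont p hp hp1 x hxI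
      have hψs := sum_mem_img hn0 hIc hψ_cont p hp hp1 x hxI
      have e1 : ∃ w ∈ I, φ w = ∑ j, p j * φ (x j) := by
        obtain ⟨w, h1, h2⟩ := hφs; exact ⟨w, h1, h2⟩
      have e2 : ∃ w ∈ I, ψ w = ∑ j, p j * ψ (x j) := by
        obtain ⟨w, h1, h2⟩ := hψs; exact ⟨w, h1, h2⟩
      refine ⟨invFunOn φ I (∑ j, p j * φ (x j)), invFunOn_mem e1, ?_, ?_⟩
      · rw [invFunOn_eq e1, ← hsum2 φ u v]
      · rw [← hEq x hxI, invFunOn_eq e2, ← hsum2 ψ u v]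
    by_cases hex : ∃ u ∈ I, ∃ v ∈ I, u < v
    · obtain ⟨u, hu, v, hv, huv⟩ := hex
      have key : ∀ s t : ℝ, s ∈ I → t ∈ I → s < t → ∀ c ∈ Icc s t,
          (ψ t - ψ s) * (φ c - φ s) = (ψ c - ψ s) * (φ t - φ s) :=
        fun s t hs ht hst => collinear_key hIc hφ_cont hψ_cont hφ_mono hq0 hq1 hm hs ht hst
      have hφuv : φ u ≠ φ v := fun e => huv.ne (hφinj hu hv e)
      have hψuv : ψ u ≠ ψ v := fun e => huv.ne (hψinj hu hv e)
      have hφd : φ v - φ u ≠ 0 := sub_ne_zero.2 (Ne.symm hφuv)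
      refine ⟨(ψ v - ψ u) / (φ v - φ u), ψ u - (ψ v - ψ u) / (φ v - φ u) * φ u,
        div_ne_zero (sub_ne_zero.2 (Ne.symm hψuv)) hφd, ?_⟩
      intro w hw
      have h2 : (ψ w - ψ u) * (φ v - φ u) = (ψ v - ψ u) * (φ w - φ u) := by
        rcases lt_trichotomy w u with hwu | rfl | huw
        · have h3 := key w v hw hv (hwu.trans huv) u ⟨hwu.le, huv.le⟩
          linear_combination h3
        · ring
        · rcases lt_trichotomy w v with hwv | rfl | hvw
          · have h3 := key u v hu hv huv w ⟨huw.le, hwv.le⟩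
            linear_combination -h3
          · ring
          · have h3 := key u w hu hw (huv.trans hvw) v ⟨huv.le, hvw.le⟩
            exact h3
      field_simp
      linear_combination h2
    · push_neg at hex
      rcases eq_empty_or_nonempty I with hIe | ⟨c, hc⟩
      · exact ⟨1, 0, one_ne_zero, fun w hw => absurd hw (hIe ▸ notMem_empty w)⟩
      · refine ⟨1, ψ c - φ c, one_ne_zero, fun w hw => ?_⟩
        have hwc : w = c := le_antisymm (hex c hc w hw) (hex w hw c hc)
        rw [hwc]; ring
  · -- backward direction
    rintro ⟨a, b, ha, hab⟩ x hx
    have hφs := sum_mem_img hn0 hIc hφ_cont p hp hp1 x hx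
    have e1 : ∃ w ∈ I, φ w = ∑ j, p j * φ (x j) := by
      obtain ⟨w, h1, h2⟩ := hφs; exact ⟨w, h1, h2⟩
    have hwI : invFunOn φ I (∑ j, p j * φ (x j)) ∈ I := invFunOn_mem e1
    have hwφ : φ (invFunOn φ I (∑ j, p j * φ (x j))) = ∑ j, p j * φ (x j) :=
      invFunOn_eq e1
    have hψs : ∑ j, p j * ψ (x j) = ψ (invFunOn φ I (∑ j, p j * φ (x j))) := by
      calc ∑ j, p j * ψ (x j) = ∑ j, (a * (p j * φ (x j)) + b * p j) :=
            Finset.sum_congr rfl (fun j _ => by rw [hab (x j) (hx j)]; ring)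
        _ = a * ∑ j, p j * φ (x j) + b * ∑ j, p j := by
            rw [Finset.sum_add_distrib, ← Finset.mul_sum, ← Finset.mul_sum]
        _ = a * φ (invFunOn φ I (∑ j, p j * φ (x j))) + b := by
            rw [hwφ, hp1, mul_one]
        _ = ψ (invFunOn φ I (∑ j, p j * φ (x j))) := (hab _ hwI).symm
    rw [hψs, hψinj.leftInvOn_invFunOn hwI]
end

section
/- Let n ≥ 2, let φ : (0,∞) → ℝ be continuous and strictly monotone, and let p₁,…,pₙ > 0 with p₁+…+pₙ = 1. Then the weighted quasiarithmetic mean A_p^{[φ]} is homogeneous (i.e. A_p^{[φ]}(tx₁,…,txₙ) = t·A_p^{[φ]}(x₁,…,xₙ) for all t, x₁,…,xₙ > 0) if and only if there exist a, b, r ∈ ℝ with a ≠ 0 such that either r ≠ 0 and φ(t) = a·t^r + b for all t > 0, or r = 0 and φ(t) = a·log t + b for all t > 0; equivalently, if and only if A_p^{[φ]}(x₁,…,xₙ) = (Σⱼ pⱼ xⱼ^r)^{1/r} for some r ≠ 0, or A_p^{[φ]}(x₁,…,xₙ) = ∏ⱼ xⱼ^{pⱼ}. -/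
open Set Function

private lemma additive_cont_linear {L : ℝ → ℝ} (hadd : ∀ x y, L (x + y) = L x + L y)
    (hcont : Continuous L) : ∀ x, L x = L 1 * x := by
  intro x
  have := (AddMonoidHom.toRealLinearMap (AddMonoidHom.mk' L hadd) hcont).map_smul x 1
  have h' : L (x • 1) = x • L 1 := this
  simpa [smul_eq_mul, mul_comm] using h'

private lemma jensen_segment {J : Set ℝ} (hJ : Convex ℝ J) {g : ℝ → ℝ}
    (hg : MonotoneOn g J) {P Q : ℝ} (hP : 0 < P) (hQ : 0 < Q) (hPQ : P + Q = 1)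
    (heq : ∀ y₁ ∈ J, ∀ y₂ ∈ J, g (P * y₁ + Q * y₂) = P * g y₁ + Q * g y₂)
    {u v : ℝ} (hu : u ∈ J) (hv : v ∈ J) (huv : u < v) :
    ∀ lam ∈ Icc (0:ℝ) 1, g (u + lam * (v - u)) = g u + lam * (g v - g u) := by
  set c : ℝ → ℝ := fun lam => u + lam * (v - u) with hc_def
  have hcJ : ∀ lam ∈ Icc (0:ℝ) 1, c lam ∈ J := by
    intro lam hlam
    have h := hJ hu hv (by linarith [hlam.2] : (0:ℝ) ≤ 1 - lam) hlam.1 (by ring)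
    convert h using 1
    simp only [smul_eq_mul, hc_def]
    ring
  set d : ℝ := g v - g u with hd_def
  have hd : 0 ≤ d := by
    have := hg hu hv huv.le
    simp [hd_def]; linarith
  set S : Set ℝ := {lam | lam ∈ Icc (0:ℝ) 1 ∧ g (c lam) = g u + lam * d} with hS_def
  have h0S : (0:ℝ) ∈ S := by
    constructor
    · exact ⟨le_refl 0, zero_le_one⟩
    · simp [hc_def]
  have h1S : (1:ℝ) ∈ S := by
    constructor
    · exact ⟨zero_le_one, le_refl 1⟩
    · simp [hc_def, hd_def]
  have hclose : ∀ lam ∈ S, ∀ mu ∈ S, P * lam + Q * mu ∈ S := by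
    rintro lam ⟨hlam1, hlam2⟩ mu ⟨hmu1, hmu2⟩
    have hmem : P * lam + Q * mu ∈ Icc (0:ℝ) 1 := by
      constructor
      · nlinarith [hP.le, hQ.le, hlam1.1, hmu1.1]
      · nlinarith [hlam1.1, hlam1.2, hmu1.1, hmu1.2]
    refine ⟨hmem, ?_⟩
    have hcc : c (P * lam + Q * mu) = P * c lam + Q * c mu := by
      simp only [hc_def]; linear_combination (-u) * hPQ
    rw [hcc, heq _ (hcJ _ hlam1) _ (hcJ _ hmu1), hlam2, hmu2]
    linear_combination (g u) * hPQ
  -- density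
  have hmax1 : max P Q < 1 := by
    apply max_lt <;> linarith
  have hmaxpos : 0 < max P Q := lt_max_of_lt_left hP
  have hdense : ∀ k : ℕ, ∀ lam ∈ Icc (0:ℝ) 1,
      ∃ s ∈ S, ∃ t ∈ S, s ≤ lam ∧ lam ≤ t ∧ t - s ≤ (max P Q) ^ k := by
    intro k
    induction k with
    | zero => intro lam hlam; exact ⟨0, h0S, 1, h1S, hlam.1, hlam.2, by norm_num⟩
    | succ k ih =>
      intro lam hlam
      obtain ⟨s, hs, t, ht, hsl, hlt, hts⟩ := ih lam hlam
      have hm : P * t + Q * s ∈ S := hclose t ht s hs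
      set m := P * t + Q * s with hm_def
      have hms : m - s = P * (t - s) := by rw [hm_def]; linear_combination s * hPQ
      have htm : t - m = Q * (t - s) := by rw [hm_def]; linear_combination (-t) * hPQ
      have hts0 : 0 ≤ t - s := by linarith
      rcases le_or_gt lam m with h | h
      · refine ⟨s, hs, m, hm, hsl, h, ?_⟩
        rw [hms]
        calc P * (t - s) ≤ max P Q * (max P Q) ^ k := by
              apply mul_le_mul (le_max_left _ _) hts (by linarith) (le_of_lt hmaxpos)
          _ = (max P Q) ^ (k+1) := by ring
      · refine ⟨m, hm, t, ht, h.le, hlt, ?_⟩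
        rw [htm]
        calc Q * (t - s) ≤ max P Q * (max P Q) ^ k := by
              apply mul_le_mul (le_max_right _ _) hts (by linarith) (le_of_lt hmaxpos)
          _ = (max P Q) ^ (k+1) := by ring
  -- squeeze
  intro lam hlam
  have key : ∀ ε > (0:ℝ), |g (c lam) - (g u + lam * d)| ≤ ε := by
    intro ε hε
    obtain ⟨k, hk⟩ := exists_pow_lt_of_lt_one (div_pos hε (by linarith : (0:ℝ) < d + 1)) hmax1
    obtain ⟨s, hs, t, ht, hsl, hlt, hts⟩ := hdense k lam hlam
    have hcs : c s ≤ c lam := by simp only [hc_def]; nlinarith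
    have hct : c lam ≤ c t := by simp only [hc_def]; nlinarith
    have h1 : g (c s) ≤ g (c lam) := hg (hcJ _ hs.1) (hcJ _ hlam) hcs
    have h2 : g (c lam) ≤ g (c t) := hg (hcJ _ hlam) (hcJ _ ht.1) hct
    rw [hs.2] at h1; rw [ht.2] at h2
    have hb1 : s * d ≤ lam * d := mul_le_mul_of_nonneg_right hsl hd
    have hb2 : lam * d ≤ t * d := mul_le_mul_of_nonneg_right hlt hd
    have habs : |g (c lam) - (g u + lam * d)| ≤ (t - s) * d := by
      rw [abs_le]; constructor <;> nlinarith
    have : (t - s) * d ≤ ε := by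
      have h3 : (t - s) * d ≤ (max P Q) ^ k * (d + 1) :=
        mul_le_mul (le_trans hts (le_refl _)) (by linarith) hd (by positivity)
      have h4 : (max P Q) ^ k * (d + 1) ≤ ε := by
        rw [lt_div_iff₀ (by linarith : (0:ℝ) < d + 1)] at hk
        linarith [hk]
      linarith
    linarith
  have : |g (c lam) - (g u + lam * d)| ≤ 0 := by
    by_contra h
    push_neg at h
    have := key (|g (c lam) - (g u + lam * d)| / 2) (by linarith)
    linarith
  have := abs_nonneg (g (c lam) - (g u + lam * d))
  have heq0 : g (c lam) - (g u + lam * d) = 0 := by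
    rw [← abs_eq_zero]; linarith
  simp only [hc_def, hd_def] at heq0 ⊢
  linarith

private lemma sorted_collinear {J : Set ℝ} (hJ : Convex ℝ J) {g : ℝ → ℝ}
    (hg : MonotoneOn g J) {P Q : ℝ} (hP : 0 < P) (hQ : 0 < Q) (hPQ : P + Q = 1)
    (heq : ∀ y₁ ∈ J, ∀ y₂ ∈ J, g (P * y₁ + Q * y₂) = P * g y₁ + Q * g y₂)
    {u v y : ℝ} (hu : u ∈ J) (hv : v ∈ J) (hy : y ∈ J) (huv : u < v) :
    (v - u) * g y = (v - y) * g u + (y - u) * g v := by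
  rcases le_or_gt y u with h1 | h1
  · rcases h1.lt_or_eq with h1 | h1
    · -- y < u < v : apply segment to pair (y, v) at point u
      have hyv : y < v := lt_trans h1 huv
      have hne : v - y ≠ 0 := by intro h; nlinarith
      have hlam : (u - y) / (v - y) ∈ Icc (0:ℝ) 1 := by
        constructor
        · apply div_nonneg <;> linarith
        · rw [div_le_one (by linarith)]; linarith
      have hseg := jensen_segment hJ hg hP hQ hPQ heq hy hv hyv _ hlam
      have hlv : (u - y) / (v - y) * (v - y) = u - y := div_mul_cancel₀ _ hne
      have hpt : y + (u - y) / (v - y) * (v - y) = u := by rw [hlv]; ring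
      rw [hpt] at hseg
      have h2 : (v - y) * g u = (v - y) * g y + (u - y) * (g v - g y) := by
        rw [hseg]; linear_combination (g v - g y) * hlv
      linarith [h2]
    · subst h1; ring
  · rcases le_or_gt y v with h2 | h2
    rcases h2.lt_or_eq with h2 | h2
    · -- u < y < v : segment on (u,v) at y
      have hne : v - u ≠ 0 := by intro h; nlinarith
      have hlam : (y - u) / (v - u) ∈ Icc (0:ℝ) 1 := by
        constructor
        · apply div_nonneg <;> linarith
        · rw [div_le_one (by linarith)]; linarith
      have hseg := jensen_segment hJ hg hP hQ hPQ heq hu hv huv _ hlam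
      have hlv : (y - u) / (v - u) * (v - u) = y - u := div_mul_cancel₀ _ hne
      have hpt : u + (y - u) / (v - u) * (v - u) = y := by rw [hlv]; ring
      rw [hpt] at hseg
      have h3 : (v - u) * g y = (v - u) * g u + (y - u) * (g v - g u) := by
        rw [hseg]; linear_combination (g v - g u) * hlv
      linarith [h3]
    · subst h2; ring
    · -- u < v < y : segment on (u, y) at v
      have huy : u < y := lt_trans huv h2
      have hne : y - u ≠ 0 := by intro h; nlinarith
      have hlam : (v - u) / (y - u) ∈ Icc (0:ℝ) 1 := by
        constructor
        · apply div_nonneg <;> linarith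
        · rw [div_le_one (by linarith)]; linarith
      have hseg := jensen_segment hJ hg hP hQ hPQ heq hu hy huy _ hlam
      have hlv : (v - u) / (y - u) * (y - u) = v - u := div_mul_cancel₀ _ hne
      have hpt : u + (v - u) / (y - u) * (y - u) = v := by rw [hlv]; ring
      rw [hpt] at hseg
      have h3 : (y - u) * g v = (y - u) * g u + (v - u) * (g y - g u) := by
        rw [hseg]; linear_combination (g y - g u) * hlv
      linarith [h3]

private lemma jensen_collinear {J : Set ℝ} (hJ : Convex ℝ J) {g : ℝ → ℝ}
    (hg : MonotoneOn g J) {P Q : ℝ} (hP : 0 < P) (hQ : 0 < Q) (hPQ : P + Q = 1)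
    (heq : ∀ y₁ ∈ J, ∀ y₂ ∈ J, g (P * y₁ + Q * y₂) = P * g y₁ + Q * g y₂)
    {u v y : ℝ} (hu : u ∈ J) (hv : v ∈ J) (hy : y ∈ J) (huv : u ≠ v) :
    (v - u) * g y = (v - y) * g u + (y - u) * g v := by
  rcases huv.lt_or_gt with hlt | hlt
  · exact sorted_collinear hJ hg hP hQ hPQ heq hu hv hy hlt
  · have h := sorted_collinear hJ hg hP hQ hPQ heq hv hu hy hlt
    linarith

private lemma hard_dir (φ : ℝ → ℝ)
    (hφ_cont : ContinuousOn φ (Ioi 0))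
    (hφ_mono : StrictMonoOn φ (Ioi 0) ∨ StrictAntiOn φ (Ioi 0))
    {P Q : ℝ} (hP : 0 < P) (hQ : 0 < Q) (hPQ : P + Q = 1)
    (hM : ∀ u : ℝ, 0 < u → ∀ v : ℝ, 0 < v → ∃ z : ℝ, 0 < z ∧
        φ z = P * φ u + Q * φ v ∧
        ∀ t : ℝ, 0 < t → φ (t * z) = P * φ (t * u) + Q * φ (t * v)) :
    ∃ a b r : ℝ, a ≠ 0 ∧
      ((r ≠ 0 ∧ ∀ t : ℝ, 0 < t → φ t = a * t ^ r + b) ∨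
        (r = 0 ∧ ∀ t : ℝ, 0 < t → φ t = a * Real.log t + b)) := by
  have hinj : InjOn φ (Ioi 0) := hφ_mono.elim StrictMonoOn.injOn StrictAntiOn.injOn
  have hφinv : ∀ x : ℝ, 0 < x → invFunOn φ (Ioi 0) (φ x) = x := fun x hx =>
    hinj.leftInvOn_invFunOn hx
  set J : Set ℝ := φ '' (Ioi 0) with hJ_def
  have hJconv : Convex ℝ J := by
    have hpre : IsPreconnected J := (isPreconnected_Ioi).image φ hφ_cont
    exact hpre.ordConnected.convex
  have hδ : φ 2 - φ 1 ≠ 0 := by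
    intro h
    have : (1:ℝ) = 2 := hinj (by norm_num) (by norm_num) (by linarith)
    norm_num at this
  have huv : φ 1 ≠ φ 2 := fun h => hδ (by linarith)
  set g : ℝ → ℝ → ℝ := fun t y => φ (t * invFunOn φ (Ioi 0) y) with hg_def
  have hgval : ∀ t x : ℝ, 0 < x → g t (φ x) = φ (t * x) := by
    intro t x hx; simp only [hg_def]; rw [hφinv x hx]
  have hgmono : ∀ t : ℝ, 0 < t → MonotoneOn (g t) J := by
    intro t ht y₁ hy₁ y₂ hy₂ h12
    obtain ⟨x₁, hx₁, rfl⟩ := hy₁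
    obtain ⟨x₂, hx₂, rfl⟩ := hy₂
    rw [mem_Ioi] at hx₁ hx₂
    rw [hgval t x₁ hx₁, hgval t x₂ hx₂]
    rcases hφ_mono with hm | hm
    · have hx : x₁ ≤ x₂ := by
        by_contra h
        push_neg at h
        exact absurd (hm (mem_Ioi.mpr hx₂) (mem_Ioi.mpr hx₁) h) (not_lt.mpr h12)
      exact hm.monotoneOn (mem_Ioi.mpr (mul_pos ht hx₁)) (mem_Ioi.mpr (mul_pos ht hx₂))
        (by nlinarith)
    · have hx : x₂ ≤ x₁ := by
        by_contra h
        push_neg at h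
        exact absurd (hm (mem_Ioi.mpr hx₁) (mem_Ioi.mpr hx₂) h) (not_lt.mpr h12)
      exact hm.antitoneOn (mem_Ioi.mpr (mul_pos ht hx₂)) (mem_Ioi.mpr (mul_pos ht hx₁))
        (by nlinarith)
  have hgjensen : ∀ t : ℝ, 0 < t → ∀ y₁ ∈ J, ∀ y₂ ∈ J,
      g t (P * y₁ + Q * y₂) = P * g t y₁ + Q * g t y₂ := by
    intro t ht y₁ hy₁ y₂ hy₂
    obtain ⟨x₁, hx₁, rfl⟩ := hy₁
    obtain ⟨x₂, hx₂, rfl⟩ := hy₂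
    rw [mem_Ioi] at hx₁ hx₂
    obtain ⟨z, hz, hz1, hz2⟩ := hM x₁ hx₁ x₂ hx₂
    rw [hgval t x₁ hx₁, hgval t x₂ hx₂, ← hz1, hgval t z hz]
    exact hz2 t ht
  have R : ∀ t : ℝ, 0 < t → ∀ s : ℝ, 0 < s →
      (φ 2 - φ 1) * φ (t * s) = (φ 2 - φ s) * φ (t * 1) + (φ s - φ 1) * φ (t * 2) := by
    intro t ht s hs
    have h1J : φ 1 ∈ J := mem_image_of_mem φ (by norm_num)
    have h2J : φ 2 ∈ J := mem_image_of_mem φ (by norm_num)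
    have hsJ : φ s ∈ J := mem_image_of_mem φ (mem_Ioi.mpr hs)
    have hcol := jensen_collinear hJconv (hgmono t ht) hP hQ hPQ (hgjensen t ht)
      h1J h2J hsJ huv
    rw [hgval t 1 one_pos, hgval t 2 two_pos, hgval t s hs] at hcol
    exact hcol
  set a : ℝ → ℝ := fun t => (φ (t * 2) - φ t) / (φ 2 - φ 1) with ha_def
  set b : ℝ → ℝ := fun t => φ t - a t * φ 1 with hb_def
  have key : ∀ t : ℝ, 0 < t → ∀ s : ℝ, 0 < s → φ (t * s) = a t * φ s + b t := by
    intro t ht s hs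
    have h3 := R t ht s hs
    rw [mul_one] at h3
    have hgoal : (φ 2 - φ 1) * φ (t * s) = (φ 2 - φ 1) * (a t * φ s + b t) := by
      simp only [ha_def, hb_def]
      field_simp
      linear_combination h3
    exact mul_left_cancel₀ hδ hgoal
  have ha_pos : ∀ t : ℝ, 0 < t → 0 < a t := by
    intro t ht
    simp only [ha_def]
    rcases hφ_mono with hm | hm
    · apply div_pos
      · have := hm (mem_Ioi.mpr ht) (mem_Ioi.mpr (by linarith : (0:ℝ) < t * 2)) (by linarith)
        linarith
      · have := hm (by norm_num : (1:ℝ) ∈ Ioi (0:ℝ)) (by norm_num : (2:ℝ) ∈ Ioi (0:ℝ))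
          one_lt_two
        linarith
    · rw [div_pos_iff]
      right
      constructor
      · have := hm (mem_Ioi.mpr ht) (mem_Ioi.mpr (by linarith : (0:ℝ) < t * 2)) (by linarith)
        linarith
      · have := hm (by norm_num : (1:ℝ) ∈ Ioi (0:ℝ)) (by norm_num : (2:ℝ) ∈ Ioi (0:ℝ))
          one_lt_two
        linarith
  have hmulab : ∀ t : ℝ, 0 < t → ∀ s : ℝ, 0 < s →
      a (t * s) = a t * a s ∧ b (t * s) = a t * b s + b t := by
    intro t ht s hs
    have e1 := key (t * s) (mul_pos ht hs) 1 one_pos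
    have e2 := key (t * s) (mul_pos ht hs) 2 two_pos
    have f1 : φ (t * (s * 1)) = a t * (a s * φ 1 + b s) + b t := by
      rw [key t ht (s * 1) (by positivity), key s hs 1 one_pos]
    have f2 : φ (t * (s * 2)) = a t * (a s * φ 2 + b s) + b t := by
      rw [key t ht (s * 2) (by positivity), key s hs 2 two_pos]
    rw [← mul_assoc] at f1 f2
    rw [e1] at f1
    rw [e2] at f2
    have hAa : a (t * s) = a t * a s := by
      have h0 : (a (t * s) - a t * a s) * (φ 2 - φ 1) = 0 := by linear_combination f2 - f1
      rcases mul_eq_zero.mp h0 with h | h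
      · linarith
      · exact absurd h hδ
    exact ⟨hAa, by linear_combination f1 - φ 1 * hAa⟩
  have hacont : ContinuousOn a (Ioi 0) := by
    have h2 : ContinuousOn (fun t : ℝ => φ (t * 2)) (Ioi 0) :=
      ContinuousOn.comp hφ_cont (continuous_mul_right (2:ℝ)).continuousOn
        (fun x hx => mem_Ioi.mpr (by have := mem_Ioi.mp hx; linarith))
    exact (h2.sub hφ_cont).div_const _
  set L : ℝ → ℝ := fun x => Real.log (a (Real.exp x)) with hL_def
  have hLcont : Continuous L := by
    have h1 : Continuous (fun x : ℝ => a (Real.exp x)) :=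
      hacont.comp_continuous Real.continuous_exp (fun x => Real.exp_pos x)
    exact h1.log fun x => (ha_pos _ (Real.exp_pos x)).ne'
  have hLadd : ∀ x y, L (x + y) = L x + L y := by
    intro x y
    simp only [hL_def]
    rw [Real.exp_add, (hmulab _ (Real.exp_pos x) _ (Real.exp_pos y)).1,
      Real.log_mul (ha_pos _ (Real.exp_pos x)).ne' (ha_pos _ (Real.exp_pos y)).ne']
  have hL := additive_cont_linear hLadd hLcont
  set r : ℝ := L 1 with hr_def
  have har : ∀ t : ℝ, 0 < t → a t = t ^ r := by
    intro t ht
    have h1 := hL (Real.log t)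
    simp only [hL_def] at h1
    rw [Real.exp_log ht] at h1
    -- h1 : log (a t) = log (a e) * log t ... careful: L 1 = log (a (exp 1))
    rw [Real.rpow_def_of_pos ht, mul_comm (Real.log t) r, hr_def]
    rw [← h1, Real.exp_log (ha_pos t ht)]
  by_cases hr0 : r = 0
  · -- logarithmic case
    have ha1 : ∀ t : ℝ, 0 < t → a t = 1 := fun t ht => by
      rw [har t ht, hr0, Real.rpow_zero]
    have hbadd : ∀ t : ℝ, 0 < t → ∀ s : ℝ, 0 < s → b (t * s) = b s + b t := by
      intro t ht s hs
      have h := (hmulab t ht s hs).2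
      rwa [ha1 t ht, one_mul] at h
    set B : ℝ → ℝ := fun x => b (Real.exp x) with hB_def
    have hBcont : Continuous B := by
      have hbcont : ContinuousOn b (Ioi 0) := by
        simp only [hb_def]
        exact hφ_cont.sub (hacont.mul continuousOn_const)
      exact hbcont.comp_continuous Real.continuous_exp fun x => Real.exp_pos x
    have hBadd : ∀ x y, B (x + y) = B x + B y := by
      intro x y
      simp only [hB_def]
      rw [Real.exp_add, hbadd _ (Real.exp_pos x) _ (Real.exp_pos y)]
      ring
    have hB := additive_cont_linear hBadd hBcont
    have hbc : ∀ t : ℝ, 0 < t → b t = B 1 * Real.log t := by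
      intro t ht
      have h := hB (Real.log t)
      simp only [hB_def] at h ⊢
      rwa [Real.exp_log ht] at h
    have hφform : ∀ t : ℝ, 0 < t → φ t = B 1 * Real.log t + φ 1 := by
      intro t ht
      have h1 : φ t = a t * φ 1 + b t := by simp only [hb_def]; ring
      rw [ha1 t ht, hbc t ht] at h1
      rw [h1]; ring
    have hc : B 1 ≠ 0 := by
      intro h
      apply hδ
      have h2 := hφform 2 two_pos
      rw [h] at h2
      have h1 := hφform 1 one_pos
      rw [h] at h1
      simp at h1 h2
      linarith
    exact ⟨B 1, φ 1, 0, hc, Or.inr ⟨rfl, hφform⟩⟩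
  · -- power case
    have ha2 : a 2 ≠ 1 := by
      rw [har 2 two_pos]
      intro h
      have hlog : Real.log ((2:ℝ) ^ r) = 0 := by rw [h, Real.log_one]
      rw [Real.log_rpow two_pos] at hlog
      have hl2 : Real.log 2 ≠ 0 := (Real.log_pos (by norm_num)).ne'
      rcases mul_eq_zero.mp hlog with h' | h'
      · exact hr0 h'
      · exact hl2 h'
    have hne2 : 1 - a 2 ≠ 0 := sub_ne_zero.mpr (Ne.symm ha2)
    set β : ℝ := b 2 / (1 - a 2) with hβ_def
    have hsym : ∀ t : ℝ, 0 < t → b t * (1 - a 2) = b 2 * (1 - a t) := by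
      intro t ht
      have h1 := (hmulab t ht 2 two_pos).2
      have h2 := (hmulab 2 two_pos t ht).2
      rw [show t * 2 = 2 * t from mul_comm t 2] at h1
      linear_combination h2 - h1
    have hbform : ∀ t : ℝ, 0 < t → b t = β * (1 - a t) := by
      intro t ht
      have h := hsym t ht
      rw [hβ_def]
      field_simp
      linear_combination h
    have hφform : ∀ t : ℝ, 0 < t → φ t = (φ 1 - β) * t ^ r + β := by
      intro t ht
      have h1 : φ t = a t * φ 1 + b t := by simp only [hb_def]; ring
      rw [hbform t ht, har t ht] at h1
      rw [h1]; ring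
    have hane : φ 1 - β ≠ 0 := by
      intro h
      apply hδ
      have h1 := hφform 1 one_pos
      have h2 := hφform 2 two_pos
      rw [h] at h1 h2
      simp at h1 h2
      linarith
    exact ⟨φ 1 - β, β, r, hane, Or.inl ⟨hr0, hφform⟩⟩

/-- Remark 5 of the paper. For `n ≥ 2`, a continuous strictly
monotone `φ : (0,∞) → ℝ` and weights `p₁,…,pₙ > 0` summing to `1`, the weighted
quasiarithmetic mean `A_p^{[φ]}` is homogeneous iff `φ(t) = a·t^r + b` (`r ≠ 0`) or
`φ(t) = a·log t + b` (`r = 0`) for some `a ≠ 0`, iff `A_p^{[φ]}` is a power mean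
`(∑ⱼ pⱼ xⱼ^r)^{1/r}` for some `r ≠ 0` or the weighted geometric mean `∏ⱼ xⱼ^{pⱼ}`. -/
theorem stmt_12 (n : ℕ) (hn : 2 ≤ n) (φ : ℝ → ℝ)
    (hφ_cont : ContinuousOn φ (Ioi 0))
    (hφ_mono : StrictMonoOn φ (Ioi 0) ∨ StrictAntiOn φ (Ioi 0))
    (p : Fin n → ℝ) (hp : ∀ j, 0 < p j) (hp1 : ∑ j, p j = 1)
    (A : (Fin n → ℝ) → ℝ)
    (hA : ∀ x : Fin n → ℝ, (∀ j, 0 < x j) →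
      A x = invFunOn φ (Ioi 0) (∑ j, p j * φ (x j))) :
    ((∀ t : ℝ, 0 < t → ∀ x : Fin n → ℝ, (∀ j, 0 < x j) →
        A (fun j => t * x j) = t * A x) ↔
      ∃ a b r : ℝ, a ≠ 0 ∧
        ((r ≠ 0 ∧ ∀ t : ℝ, 0 < t → φ t = a * t ^ r + b) ∨
          (r = 0 ∧ ∀ t : ℝ, 0 < t → φ t = a * Real.log t + b))) ∧
    ((∀ t : ℝ, 0 < t → ∀ x : Fin n → ℝ, (∀ j, 0 < x j) →
        A (fun j => t * x j) = t * A x) ↔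
      ∃ r : ℝ,
        ((r ≠ 0 ∧ ∀ x : Fin n → ℝ, (∀ j, 0 < x j) →
            A x = (∑ j, p j * x j ^ r) ^ (1 / r)) ∨
          (r = 0 ∧ ∀ x : Fin n → ℝ, (∀ j, 0 < x j) →
            A x = ∏ j, x j ^ p j))) := by
  have hinj : InjOn φ (Ioi 0) := hφ_mono.elim StrictMonoOn.injOn StrictAntiOn.injOn
  have hφinv : ∀ x : ℝ, 0 < x → invFunOn φ (Ioi 0) (φ x) = x := fun x hx =>
    hinj.leftInvOn_invFunOn hx
  set j0 : Fin n := ⟨0, by omega⟩ with hj0_def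
  set j1 : Fin n := ⟨1, by omega⟩ with hj1_def
  have hj01 : j1 ≠ j0 := by
    simp only [hj0_def, hj1_def, Ne, Fin.mk.injEq]
    omega
  set P : ℝ := p j0 with hP_def
  set Q : ℝ := ∑ j ∈ Finset.univ.erase j0, p j with hQ_def
  have hP : 0 < P := hp j0
  have hQ : 0 < Q :=
    Finset.sum_pos (fun j _ => hp j) ⟨j1, Finset.mem_erase.mpr ⟨hj01, Finset.mem_univ _⟩⟩
  have hPQ : P + Q = 1 := by
    rw [hP_def, hQ_def, Finset.add_sum_erase _ _ (Finset.mem_univ j0)]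
    exact hp1
  have hvec : ∀ u v : ℝ,
      ∑ j, p j * φ (if j = j0 then u else v) = P * φ u + Q * φ v := by
    intro u v
    rw [← Finset.add_sum_erase _ (fun j => p j * φ (if j = j0 then u else v))
      (Finset.mem_univ j0)]
    simp only [if_pos rfl]
    congr 1
    rw [hQ_def, Finset.sum_mul]
    apply Finset.sum_congr rfl
    intro j hj
    rw [if_neg (Finset.mem_erase.mp hj).1]
  have hJconv : Convex ℝ (φ '' Ioi 0) := by
    have hpre : IsPreconnected (φ '' Ioi 0) := (isPreconnected_Ioi).image φ hφ_cont
    exact hpre.ordConnected.convex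
  have hcombo : ∀ w₁ w₂ : ℝ, 0 < w₁ → 0 < w₂ →
      ∃ z : ℝ, 0 < z ∧ φ z = P * φ w₁ + Q * φ w₂ := by
    intro w₁ w₂ h1 h2
    have hmem : P * φ w₁ + Q * φ w₂ ∈ φ '' Ioi 0 := by
      have := hJconv (mem_image_of_mem φ (mem_Ioi.mpr h1))
        (mem_image_of_mem φ (mem_Ioi.mpr h2)) hP.le hQ.le hPQ
      simpa [smul_eq_mul] using this
    obtain ⟨z, hz, hφz⟩ := hmem
    exact ⟨z, mem_Ioi.mp hz, hφz⟩
  -- homogeneity implies the generator form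
  have hHomP1 : (∀ t : ℝ, 0 < t → ∀ x : Fin n → ℝ, (∀ j, 0 < x j) →
        A (fun j => t * x j) = t * A x) →
      ∃ a b r : ℝ, a ≠ 0 ∧
        ((r ≠ 0 ∧ ∀ t : ℝ, 0 < t → φ t = a * t ^ r + b) ∨
          (r = 0 ∧ ∀ t : ℝ, 0 < t → φ t = a * Real.log t + b)) := by
    intro hhom
    apply hard_dir φ hφ_cont hφ_mono hP hQ hPQ
    intro u hu v hv
    set x : Fin n → ℝ := fun j => if j = j0 then u else v with hx_def
    have hxpos : ∀ j, 0 < x j := by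
      intro j
      simp only [hx_def]
      split
      · exact hu
      · exact hv
    have hAx : 0 < A x ∧ φ (A x) = P * φ u + Q * φ v := by
      obtain ⟨z, hz, hφz⟩ := hcombo u v hu hv
      have : A x = z := by rw [hA x hxpos, hvec, ← hφz, hφinv z hz]
      rw [this]
      exact ⟨hz, hφz⟩
    refine ⟨A x, hAx.1, hAx.2, ?_⟩
    intro t ht
    have hxt : (fun j => t * x j) = fun j => if j = j0 then t * u else t * v := by
      funext j
      simp only [hx_def]
      split <;> rfl
    have hAxt : φ (A fun j => t * x j) = P * φ (t * u) + Q * φ (t * v) := by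
      obtain ⟨z, hz, hφz⟩ := hcombo (t * u) (t * v) (mul_pos ht hu) (mul_pos ht hv)
      have hsum2 : ∑ j, p j * φ (t * x j)
          = ∑ j, p j * φ (if j = j0 then t * u else t * v) :=
        Finset.sum_congr rfl fun j _ => by simp only [hx_def, mul_ite]
      have : A (fun j => t * x j) = z := by
        rw [hA _ (fun j => mul_pos ht (hxpos j)), hsum2, hvec, ← hφz, hφinv z hz]
      rw [this]
      exact hφz
    rw [← hAxt, hhom t ht x hxpos]
  -- generator form implies the power/geometric mean form
  have hP1P2 : (∃ a b r : ℝ, a ≠ 0 ∧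
        ((r ≠ 0 ∧ ∀ t : ℝ, 0 < t → φ t = a * t ^ r + b) ∨
          (r = 0 ∧ ∀ t : ℝ, 0 < t → φ t = a * Real.log t + b))) →
      ∃ r : ℝ,
        ((r ≠ 0 ∧ ∀ x : Fin n → ℝ, (∀ j, 0 < x j) →
            A x = (∑ j, p j * x j ^ r) ^ (1 / r)) ∨
          (r = 0 ∧ ∀ x : Fin n → ℝ, (∀ j, 0 < x j) →
            A x = ∏ j, x j ^ p j)) := by
    rintro ⟨a, b, r, ha, ⟨hr, hφf⟩ | ⟨hr, hφf⟩⟩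
    · refine ⟨r, Or.inl ⟨hr, ?_⟩⟩
      intro x hx
      have hS : 0 < ∑ j, p j * x j ^ r :=
        Finset.sum_pos (fun j _ => mul_pos (hp j) (Real.rpow_pos_of_pos (hx j) r))
          ⟨j0, Finset.mem_univ _⟩
      have hsum : ∑ j, p j * φ (x j) = a * (∑ j, p j * x j ^ r) + b := by
        have h1 : ∀ j ∈ Finset.univ, p j * φ (x j) = a * (p j * x j ^ r) + b * p j := by
          intro j _
          rw [hφf _ (hx j)]
          ring
        rw [Finset.sum_congr rfl h1, Finset.sum_add_distrib, ← Finset.mul_sum,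
          ← Finset.mul_sum, hp1, mul_one]
      have hz : 0 < (∑ j, p j * x j ^ r) ^ (1 / r) := Real.rpow_pos_of_pos hS _
      have hφz : φ ((∑ j, p j * x j ^ r) ^ (1 / r)) = a * (∑ j, p j * x j ^ r) + b := by
        rw [hφf _ hz, ← Real.rpow_mul hS.le, one_div_mul_cancel hr, Real.rpow_one]
      rw [hA x hx, hsum, ← hφz, hφinv _ hz]
    · refine ⟨r, Or.inr ⟨hr, ?_⟩⟩
      intro x hx
      have hG : 0 < ∏ j, x j ^ p j :=
        Finset.prod_pos fun j _ => Real.rpow_pos_of_pos (hx j) _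
      have hlog : Real.log (∏ j, x j ^ p j) = ∑ j, p j * Real.log (x j) := by
        rw [Real.log_prod (fun j _ => (Real.rpow_pos_of_pos (hx j) _).ne')]
        exact Finset.sum_congr rfl fun j _ => Real.log_rpow (hx j) _
      have hsum : ∑ j, p j * φ (x j) = a * Real.log (∏ j, x j ^ p j) + b := by
        have h1 : ∀ j ∈ Finset.univ, p j * φ (x j)
            = a * (p j * Real.log (x j)) + b * p j := by
          intro j _
          rw [hφf _ (hx j)]
          ring
        rw [Finset.sum_congr rfl h1, Finset.sum_add_distrib, ← Finset.mul_sum,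
          ← Finset.mul_sum, hp1, mul_one, hlog]
      rw [hA x hx, hsum, ← hφf _ hG, hφinv _ hG]
  -- the power/geometric mean form implies homogeneity
  have hP2Hom : (∃ r : ℝ,
        ((r ≠ 0 ∧ ∀ x : Fin n → ℝ, (∀ j, 0 < x j) →
            A x = (∑ j, p j * x j ^ r) ^ (1 / r)) ∨
          (r = 0 ∧ ∀ x : Fin n → ℝ, (∀ j, 0 < x j) →
            A x = ∏ j, x j ^ p j))) →
      ∀ t : ℝ, 0 < t → ∀ x : Fin n → ℝ, (∀ j, 0 < x j) →
        A (fun j => t * x j) = t * A x := by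
    rintro ⟨r, ⟨hr, hAf⟩ | ⟨hr, hAf⟩⟩ t ht x hx
    · have hx' : ∀ j, 0 < t * x j := fun j => mul_pos ht (hx j)
      rw [hAf _ hx', hAf x hx]
      have h1 : ∀ j ∈ Finset.univ, p j * (t * x j) ^ r = t ^ r * (p j * x j ^ r) := by
        intro j _
        rw [Real.mul_rpow ht.le (hx j).le]
        ring
      have hsumnn : 0 ≤ ∑ j, p j * x j ^ r :=
        Finset.sum_nonneg fun j _ =>
          le_of_lt (mul_pos (hp j) (Real.rpow_pos_of_pos (hx j) r))
      rw [Finset.sum_congr rfl h1, ← Finset.mul_sum,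
        Real.mul_rpow (Real.rpow_nonneg ht.le r) hsumnn,
        ← Real.rpow_mul ht.le, mul_one_div_cancel hr, Real.rpow_one]
    · have hx' : ∀ j, 0 < t * x j := fun j => mul_pos ht (hx j)
      rw [hAf _ hx', hAf x hx]
      have h1 : ∀ j ∈ Finset.univ, (t * x j) ^ p j = t ^ p j * x j ^ p j := fun j _ =>
        Real.mul_rpow ht.le (hx j).le
      rw [Finset.prod_congr rfl h1, Finset.prod_mul_distrib,
        ← Real.rpow_sum_of_pos ht, hp1, Real.rpow_one]
  exact ⟨⟨hHomP1, fun h => hP2Hom (hP1P2 h)⟩, ⟨fun h => hP1P2 (hHomP1 h), hP2Hom⟩⟩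
end

section
/- Let n ≥ 2, let γ : (0,∞) → (0,∞) be continuous and strictly monotone, and let p₁,…,pₙ > 0 with p₁+…+pₙ = 1. If the weighted quasigeometric mean M_p^{[γ]} is homogeneous (M_p^{[γ]}(tx₁,…,txₙ) = t·M_p^{[γ]}(x₁,…,xₙ) for all t, x₁,…,xₙ > 0) and satisfies M_p^{[γ]}(x₁,…,xₙ)·M_p^{[γ]}(1/x₁,…,1/xₙ) = 1 for all x₁,…,xₙ > 0, then there exist a, b ∈ ℝ with a ≠ 0 such that γ(t) = e^b·t^a for all t > 0. -/
open Set Function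

lemma aux_solve (h : ℝ → ℝ) (hcont : Continuous h) (h0 : h 0 = 0) (h1 : h 1 ≠ 0)
    (c : ℝ) (hfe : ∀ x s, h (x + s) = h x + h s + c * h x * h s)
    (p q : ℝ) (hp : 0 < p) (hq : 0 < q) (hpq : p + q = 1)
    (m : ℝ) (hm : h m = p * h 1) (hm' : h (-m) = p * h (-1)) :
    ∃ a : ℝ, a ≠ 0 ∧ ∀ x, h x = a * x := by
  rcases eq_or_ne c 0 with hc | hc
  · -- additive case
    subst hc
    have hadd : ∀ a b, h (a + b) = h a + h b := by intro a b; rw [hfe]; ring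
    let f : ℝ →+ ℝ := AddMonoidHom.mk' h hadd
    have hf : Continuous f := hcont
    have hlin : ∀ x : ℝ, f (x • (1:ℝ)) = x • f 1 := fun x => map_real_smul f hf x 1
    refine ⟨h 1, h1, fun x => ?_⟩
    have := hlin x
    simp only [smul_eq_mul, mul_one] at this
    rw [mul_comm]
    exact this
  · -- multiplicative case leads to contradiction
    exfalso
    set G : ℝ → ℝ := fun x => 1 + c * h x with hG
    have hmul : ∀ x s, G (x + s) = G x * G s := by
      intro x s
      simp only [hG, hfe]
      ring
    have hG0 : G 0 = 1 := by simp [hG, h0]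
    have hinv : ∀ x, G x * G (-x) = 1 := by
      intro x; rw [← hmul]; simp [hG0]
    have hGpos : ∀ x, 0 < G x := by
      intro x
      have hsq : G x = G (x/2) * G (x/2) := by rw [← hmul]; ring_nf
      have hne : G x ≠ 0 := by
        intro hz
        have := hinv x
        rw [hz, zero_mul] at this
        exact one_ne_zero this.symm
      have : 0 ≤ G x := by rw [hsq]; exact mul_self_nonneg _
      exact lt_of_le_of_ne this (Ne.symm hne)
    set y := G 1 with hy
    have hy0 : 0 < y := hGpos 1
    have hGm : G m = q + p * y := by
      simp only [hG, hm, hy]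
      ring_nf
      nlinarith [hpq]
    have hGm' : G (-m) = q + p * G (-1) := by
      simp only [hG, hm']
      nlinarith [hpq]
    have hGinv1 : y * G (-1) = 1 := hinv 1
    have hmm : (q + p * y) * (q + p * G (-1)) = 1 := by
      rw [← hGm, ← hGm']; exact hinv m
    have hGneg1 : G (-1) = 1 / y := by field_simp at hGinv1 ⊢; linarith [hGinv1]
    rw [hGneg1] at hmm
    have hy1 : y = 1 := by
      have h2 : (q + p * y) * (q * y + p) = y := by
        field_simp at hmm
        nlinarith [hmm]
      have key : p*q*(y-1)^2 = 0 := by linear_combination h2 - (p+q+1)*y*hpq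
      have hpq' : 0 < p*q := mul_pos hp hq
      have h3 : (y-1)^2 = 0 := by
        rcases mul_eq_zero.1 key with h' | h'
        · exact absurd h' hpq'.ne'
        · exact h'
      have := pow_eq_zero_iff (n := 2) (by norm_num) |>.1 h3
      linarith [sub_eq_zero.1 this]
    have : c * h 1 = 0 := by
      have : G 1 = 1 := by rw [← hy, hy1]
      simp only [hG] at this
      linarith
    rcases mul_eq_zero.1 this with h' | h'
    · exact hc h'
    · exact h1 h'


lemma aux_dense_s15 {P : ℝ → Prop} {p : ℝ} (hp0 : 0 < p) (hp1 : p < 1)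
    (h0 : P 0) (h1 : P 1)
    (hop : ∀ a b, P a → P b → P (p*a + (1-p)*b)) :
    ∀ x ∈ Icc (0:ℝ) 1, ∀ ε > (0:ℝ), ∃ l, P l ∧ |x - l| < ε := by
  set r : ℝ := max p (1-p) with hr
  have hr0 : 0 < r := lt_of_lt_of_le hp0 (le_max_left _ _)
  have hr1 : r < 1 := by
    rw [hr]; apply max_lt hp1; linarith
  have key : ∀ k : ℕ, ∀ a b : ℝ, a ≤ b → P a → P b →
      ∀ x ∈ Icc a b, ∃ l, P l ∧ |x - l| ≤ r^k * (b - a) := by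
    intro k
    induction k with
    | zero =>
      intro a b hab ha hb x hx
      exact ⟨a, ha, by rw [abs_of_nonneg (by linarith [hx.1])]; simp; linarith [hx.2]⟩
    | succ k ih =>
      intro a b hab ha hb x hx
      set c : ℝ := p*a + (1-p)*b with hc
      have hac : a ≤ c := by nlinarith
      have hcb : c ≤ b := by nlinarith
      have hPc : P c := hop a b ha hb
      rcases le_total x c with h | h
      · obtain ⟨l, hl, hle⟩ := ih a c hac ha hPc x ⟨hx.1, h⟩
        refine ⟨l, hl, hle.trans ?_⟩
        have : c - a = (1-p)*(b-a) := by ring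
        have h2 : c - a ≤ r * (b - a) := by
          rw [this]; apply mul_le_mul_of_nonneg_right (le_max_right _ _); linarith
        calc r^k * (c-a) ≤ r^k * (r*(b-a)) := by
              apply mul_le_mul_of_nonneg_left h2 (pow_nonneg hr0.le _)
          _ = r^(k+1) * (b-a) := by ring
      · obtain ⟨l, hl, hle⟩ := ih c b hcb hPc hb x ⟨h, hx.2⟩
        refine ⟨l, hl, hle.trans ?_⟩
        have h2 : b - c ≤ r * (b - a) := by
          have : b - c = p*(b-a) := by ring
          rw [this]; apply mul_le_mul_of_nonneg_right (le_max_left _ _); linarith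
        calc r^k * (b-c) ≤ r^k * (r*(b-a)) := by
              apply mul_le_mul_of_nonneg_left h2 (pow_nonneg hr0.le _)
          _ = r^(k+1) * (b-a) := by ring
  intro x hx ε hε
  obtain ⟨k, hk⟩ := exists_pow_lt_of_lt_one hε hr1
  obtain ⟨l, hl, hle⟩ := key k 0 1 zero_le_one h0 h1 x hx
  exact ⟨l, hl, by simpa using lt_of_le_of_lt (by simpa using hle) hk⟩



/-- Theorem 2, (i) ⟹ (ii). For `n ≥ 2`, a continuous strictly
monotone `γ : (0,∞) → (0,∞)` and weights `p₁,…,pₙ > 0` summing to `1`, if the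
weighted quasigeometric mean `M_p^{[γ]}(x) = γ⁻¹(∏ⱼ γ(xⱼ)^{pⱼ})` is homogeneous and
satisfies `M(x)·M(1/x) = 1` for all positive `x`, then `γ(t) = e^b·t^a` for some
`a ≠ 0` and `b`. -/
theorem stmt_15 (n : ℕ) (hn : 2 ≤ n) (γ : ℝ → ℝ)
    (hγ_maps : ∀ x ∈ Ioi (0:ℝ), γ x ∈ Ioi (0:ℝ))
    (hγ_cont : ContinuousOn γ (Ioi 0))
    (hγ_mono : StrictMonoOn γ (Ioi 0) ∨ StrictAntiOn γ (Ioi 0))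
    (p : Fin n → ℝ) (hp : ∀ j, 0 < p j) (hp1 : ∑ j, p j = 1)
    (M : (Fin n → ℝ) → ℝ)
    (hM : ∀ x : Fin n → ℝ, (∀ j, 0 < x j) →
      M x = invFunOn γ (Ioi 0) (∏ j, γ (x j) ^ p j))
    (h_hom : ∀ t : ℝ, 0 < t → ∀ x : Fin n → ℝ, (∀ j, 0 < x j) →
      M (fun j => t * x j) = t * M x)
    (h_rec : ∀ x : Fin n → ℝ, (∀ j, 0 < x j) →
      M x * M (fun j => (x j)⁻¹) = 1) :
    ∃ a b : ℝ, a ≠ 0 ∧ ∀ t : ℝ, 0 < t → γ t = Real.exp b * t ^ a := by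
  classical
  set j0 : Fin n := ⟨0, by omega⟩ with hj0
  set j1 : Fin n := ⟨1, by omega⟩ with hj1
  have hj01 : j1 ≠ j0 := by simp [hj0, hj1, Fin.ext_iff]
  set g : ℝ → ℝ := fun u => Real.log (γ (Real.exp u)) with hgdef
  have gpos : ∀ u, 0 < γ (Real.exp u) := fun u => hγ_maps _ (Real.exp_pos u)
  have gexp : ∀ u, Real.exp (g u) = γ (Real.exp u) := fun u => Real.exp_log (gpos u)
  set p₀ : ℝ := p j0 with hp₀
  set q : ℝ := 1 - p₀ with hqdef
  have hqsum : ∑ j ∈ Finset.univ.erase j0, p j = q := by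
    have := Finset.add_sum_erase Finset.univ p (Finset.mem_univ j0)
    rw [hp1] at this
    rw [hqdef, hp₀]
    linarith
  have hq0 : 0 < q := by
    rw [← hqsum]
    have hmem : j1 ∈ Finset.univ.erase j0 := Finset.mem_erase.2 ⟨hj01, Finset.mem_univ _⟩
    calc (0:ℝ) < p j1 := hp j1
      _ ≤ _ := Finset.single_le_sum (fun i _ => (hp i).le) hmem
  have hp0 : 0 < p₀ := hp j0
  have hpq : p₀ + q = 1 := by rw [hqdef]; ring
  -- continuity of g
  have hgc : Continuous g := by
    rw [continuous_iff_continuousAt]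
    intro x
    have h1 : ContinuousAt (fun u => γ (Real.exp u)) x :=
      (hγ_cont.continuousAt (Ioi_mem_nhds (Real.exp_pos x))).comp
        Real.continuous_exp.continuousAt
    exact h1.log (gpos x).ne'
  -- monotonicity of g
  have gmono : StrictMono g ∨ StrictAnti g := by
    rcases hγ_mono with hm | hm
    · left; intro a b hab
      exact Real.log_lt_log (gpos a)
        (hm (Real.exp_pos a) (Real.exp_pos b) (Real.exp_lt_exp.2 hab))
    · right; intro a b hab
      exact Real.log_lt_log (gpos b)
        (hm (Real.exp_pos a) (Real.exp_pos b) (Real.exp_lt_exp.2 hab))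
  have ginj : Injective g := by
    rcases gmono with hm | hm
    exacts [hm.injective, hm.injective]
  have key_mem : ∀ a b x : ℝ, x ∈ uIcc a b ↔ g x ∈ uIcc (g a) (g b) := by
    intro a b x
    rcases gmono with hm | hm
    · rw [mem_uIcc, mem_uIcc, hm.le_iff_le, hm.le_iff_le, hm.le_iff_le, hm.le_iff_le]
    · rw [mem_uIcc, mem_uIcc, hm.le_iff_ge, hm.le_iff_ge, hm.le_iff_ge, hm.le_iff_ge]
      tauto
  -- inverse function fact
  have injγ : InjOn γ (Ioi 0) := by
    rcases hγ_mono with hm | hm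
    exacts [hm.injOn, hm.injOn]
  have invγ : ∀ y ∈ Ioi (0:ℝ), invFunOn γ (Ioi 0) (γ y) = y := fun y hy =>
    injγ (invFunOn_apply_mem hy) hy (invFunOn_apply_eq hy)
  -- the product computation
  have hprod : ∀ X Y : ℝ,
      (∏ j, γ (if j = j0 then Real.exp X else Real.exp Y) ^ p j)
        = Real.exp (p₀ * g X + q * g Y) := by
    intro X Y
    have hterm : ∀ j : Fin n, γ (if j = j0 then Real.exp X else Real.exp Y) ^ p j
        = Real.exp ((if j = j0 then g X else g Y) * p j) := by
      intro j
      by_cases hj : j = j0 <;>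
        simp only [hj, if_pos, if_neg, if_true, if_false] <;>
        rw [Real.rpow_def_of_pos (gpos _)]
    rw [Finset.prod_congr rfl (fun j _ => hterm j), ← Real.exp_sum]
    congr 1
    rw [← Finset.add_sum_erase _ _ (Finset.mem_univ j0), if_pos rfl]
    have : ∑ j ∈ Finset.univ.erase j0, (if j = j0 then g X else g Y) * p j
        = ∑ j ∈ Finset.univ.erase j0, g Y * p j :=
      Finset.sum_congr rfl (fun j hj => by
        rw [if_neg (Finset.mem_erase.1 hj).1])
    rw [this, ← Finset.mul_sum, hqsum]
    ring
  -- M on two-valued vectors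
  have hxpos : ∀ X Y : ℝ, ∀ j : Fin n,
      (0:ℝ) < (fun j => if j = j0 then Real.exp X else Real.exp Y) j := by
    intro X Y j
    by_cases hj : j = j0 <;> simp [hj, Real.exp_pos]
  have hMx : ∀ X Y w : ℝ, g w = p₀ * g X + q * g Y →
      M (fun j => if j = j0 then Real.exp X else Real.exp Y) = Real.exp w := by
    intro X Y w hw
    rw [hM _ (hxpos X Y)]
    have : (∏ j, γ ((fun j => if j = j0 then Real.exp X else Real.exp Y) j) ^ p j)
        = γ (Real.exp w) := by
      simp only []
      rw [hprod, ← hw, gexp]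
    rw [this]
    exact invγ _ (Real.exp_pos w)
  -- existence of solutions
  have hex : ∀ X Y : ℝ, ∃ w, g w = p₀ * g X + q * g Y := by
    intro X Y
    have hsub : p₀ * g X + q * g Y ∈ uIcc (g X) (g Y) := by
      have eX : p₀ * g X + q * g X = g X := by linear_combination (g X) * hpq
      have eY : p₀ * g Y + q * g Y = g Y := by linear_combination (g Y) * hpq
      rcases le_total (g X) (g Y) with h | h
      · rw [uIcc_of_le h]
        constructor
        · linarith [mul_nonneg hq0.le (sub_nonneg.2 h)]
        · linarith [mul_nonneg hp0.le (sub_nonneg.2 h)]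
      · rw [uIcc_of_ge h]
        constructor
        · linarith [mul_nonneg hp0.le (sub_nonneg.2 h)]
        · linarith [mul_nonneg hq0.le (sub_nonneg.2 h)]
    obtain ⟨w, _, hw⟩ := intermediate_value_uIcc (hgc.continuousOn) hsub
    exact ⟨w, hw⟩
  -- step (a): translation invariance
  have step_a : ∀ u v m : ℝ, g m = p₀ * g u + q * g v →
      ∀ s, g (s + m) = p₀ * g (s + u) + q * g (s + v) := by
    intro u v m hm s
    obtain ⟨w, hw⟩ := hex (s + u) (s + v)
    have h1 := hMx (s + u) (s + v) w hw
    have h2 : M (fun j => Real.exp s * (if j = j0 then Real.exp u else Real.exp v))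
        = Real.exp s * Real.exp m := by
      rw [h_hom (Real.exp s) (Real.exp_pos s) _ (hxpos u v), hMx u v m hm]
    have heq : (fun j => Real.exp s * (if j = j0 then Real.exp u else Real.exp v))
        = (fun j => if j = j0 then Real.exp (s + u) else Real.exp (s + v)) := by
      funext j
      by_cases hj : j = j0 <;> simp [hj, Real.exp_add]
    rw [heq, h1, ← Real.exp_add] at h2
    have hws : w = s + m := Real.exp_injective h2
    rw [← hws]; exact hw
  -- step (b): reciprocity
  have step_b : ∀ u v m : ℝ, g m = p₀ * g u + q * g v →
      g (-m) = p₀ * g (-u) + q * g (-v) := by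
    intro u v m hm
    obtain ⟨w, hw⟩ := hex (-u) (-v)
    have h1 := hMx (-u) (-v) w hw
    have h2 := h_rec _ (hxpos u v)
    rw [hMx u v m hm] at h2
    have heq : (fun j => ((fun j => if j = j0 then Real.exp u else Real.exp v) j)⁻¹)
        = (fun j => if j = j0 then Real.exp (-u) else Real.exp (-v)) := by
      funext j
      by_cases hj : j = j0 <;> simp [hj, Real.exp_neg]
    rw [heq, h1, ← Real.exp_add] at h2
    have hws : w = -m := by
      rw [show (1:ℝ) = Real.exp 0 by simp] at h2
      have := Real.exp_injective h2
      linarith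
    rw [← hws]; exact hw
  -- the set of good ratios
  set S : ℝ → Prop := fun l => l ∈ Icc (0:ℝ) 1 ∧
      ∀ u v : ℝ, ∃ m, ∀ s, g (s + m) = l * g (s + u) + (1 - l) * g (s + v) with hSdef
  have hS0 : S 0 := ⟨⟨le_refl 0, zero_le_one⟩, fun u v => ⟨v, fun s => by ring⟩⟩
  have hS1 : S 1 := ⟨⟨zero_le_one, le_refl 1⟩, fun u v => ⟨u, fun s => by ring⟩⟩
  have hSop : ∀ a b, S a → S b → S (p₀ * a + (1 - p₀) * b) := by
    rintro a b ⟨ha1, ha2⟩ ⟨hb1, hb2⟩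
    constructor
    · constructor
      · have h1 := mul_nonneg hp0.le ha1.1
        have h2 := mul_nonneg (by linarith : (0:ℝ) ≤ 1 - p₀) hb1.1
        linarith
      · have h1 := mul_le_mul_of_nonneg_left ha1.2 hp0.le
        have h2 := mul_le_mul_of_nonneg_left hb1.2 (by linarith : (0:ℝ) ≤ 1 - p₀)
        linarith
    · intro u v
      obtain ⟨m₁, hm₁⟩ := ha2 u v
      obtain ⟨m₂, hm₂⟩ := hb2 u v
      obtain ⟨m, hm⟩ := hex m₁ m₂
      refine ⟨m, fun s => ?_⟩
      have hst := step_a m₁ m₂ m hm s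
      rw [hm₁ s, hm₂ s] at hst
      rw [hst, hqdef]
      ring
  have hdense := aux_dense_s15 hp0 (by linarith : p₀ < 1) hS0 hS1 hSop
  -- KEY: full family of identities
  have KEY : ∀ u v : ℝ, u < v → ∀ m ∈ Icc u v, ∀ s,
      g (s + m) = ((g m - g v)/(g u - g v)) * g (s + u)
        + (1 - (g m - g v)/(g u - g v)) * g (s + v) := by
    intro u v huv m hm
    have hguv : g u - g v ≠ 0 :=
      sub_ne_zero.2 (fun h => absurd (ginj h) (ne_of_lt huv))
    set lam := (g m - g v)/(g u - g v) with hlam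
    have hgm : g m ∈ uIcc (g u) (g v) :=
      (key_mem u v m).1 (by rw [uIcc_of_le huv.le]; exact hm)
    have hlam01 : lam ∈ Icc (0:ℝ) 1 := by
      rcases mem_uIcc.1 hgm with ⟨h1, h2⟩ | ⟨h1, h2⟩
      · have hd : g u - g v < 0 :=
          lt_of_le_of_ne (by linarith) hguv
        constructor
        · rw [hlam, div_nonneg_iff]; right
          exact ⟨by linarith, by linarith⟩
        · have h3 : 1 - lam = (g u - g m)/(g u - g v) := by
            rw [hlam]; field_simp; ring
          have h4 : 0 ≤ 1 - lam := by
            rw [h3, div_nonneg_iff]; right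
            exact ⟨by linarith, by linarith⟩
          linarith
      · have hd : 0 < g u - g v :=
          lt_of_le_of_ne (by linarith) (Ne.symm hguv)
        constructor
        · exact div_nonneg (by linarith) hd.le
        · rw [hlam, div_le_one hd]; linarith
    have hseq : ∀ k : ℕ, ∃ l, S l ∧ |lam - l| < 1/(k+1) := fun k =>
      hdense lam hlam01 (1/(k+1)) (by positivity)
    choose ls hlsS hlsd using hseq
    have hconv : Filter.Tendsto ls Filter.atTop (nhds lam) := by
      rw [tendsto_iff_dist_tendsto_zero]
      apply squeeze_zero (fun k => dist_nonneg) (fun k => ?_)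
        tendsto_one_div_add_atTop_nhds_zero_nat
      rw [Real.dist_eq, abs_sub_comm]
      exact (hlsd k).le
    choose ms hms using fun k => (hlsS k).2 u v
    have hmsmem : ∀ k, ms k ∈ Icc u v := by
      intro k
      rw [← uIcc_of_le huv.le]
      apply (key_mem u v (ms k)).2
      have h0 := hms k 0
      simp only [zero_add] at h0
      rcases (hlsS k).1 with ⟨hl0, hl1⟩
      rw [h0]
      rcases le_total (g u) (g v) with h | h
      · rw [uIcc_of_le h]
        constructor
        · linarith [mul_nonneg (by linarith : (0:ℝ) ≤ 1 - ls k) (sub_nonneg.2 h)]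
        · linarith [mul_nonneg hl0 (sub_nonneg.2 h)]
      · rw [uIcc_of_ge h]
        constructor
        · linarith [mul_nonneg hl0 (sub_nonneg.2 h)]
        · linarith [mul_nonneg (by linarith : (0:ℝ) ≤ 1 - ls k) (sub_nonneg.2 h)]
    obtain ⟨mstar, hmemstar, φ, hφmono, hφconv⟩ :=
      tendsto_subseq_of_bounded (Metric.isBounded_Icc (a := u) (b := v)) hmsmem
    have hlim : ∀ s, g (s + mstar) = lam * g (s + u) + (1 - lam) * g (s + v) := by
      intro s
      have t1 : Filter.Tendsto (fun k => g (s + ms (φ k))) Filter.atTop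
          (nhds (g (s + mstar))) :=
        ((hgc.comp (continuous_const.add continuous_id)).tendsto mstar).comp hφconv
      have hc : Filter.Tendsto (fun k => ls (φ k)) Filter.atTop (nhds lam) :=
        hconv.comp hφmono.tendsto_atTop
      have t2 : Filter.Tendsto (fun k => ls (φ k) * g (s+u) + (1 - ls (φ k)) * g (s+v))
          Filter.atTop (nhds (lam * g (s+u) + (1-lam) * g (s+v))) :=
        (hc.mul tendsto_const_nhds).add ((tendsto_const_nhds.sub hc).mul tendsto_const_nhds)
      have heqf : (fun k => g (s + ms (φ k)))
          = fun k => ls (φ k) * g (s+u) + (1 - ls (φ k)) * g (s+v) :=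
        funext fun k => hms (φ k) s
      rw [heqf] at t1
      exact tendsto_nhds_unique t1 t2
    have h0 := hlim 0
    simp only [zero_add] at h0
    have hmul : lam * (g u - g v) = g m - g v := by
      rw [hlam]; exact div_mul_cancel₀ _ hguv
    have hgm' : g mstar = g m := by
      rw [h0]; nlinarith [hmul]
    intro s
    rw [← ginj hgm']
    exact hlim s
  -- three-point family: g(s+x) is an affine combination of g s and g(s+1)
  have FE : ∀ x : ℝ, ∃ α : ℝ, ∀ s, g (s + x) = α * g s + (1 - α) * g (s + 1) := by
    intro x
    set u := min x 0 - 1 with hu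
    set v := max x 1 + 1 with hv
    have hmr := min_le_right x 0
    have hml := min_le_left x 0
    have hxr := le_max_left x 1
    have h1r := le_max_right x 1
    have huv : u < v := by rw [hu, hv]; linarith
    have hxm : x ∈ Icc u v := ⟨by rw [hu]; linarith, by rw [hv]; linarith⟩
    have h0m : (0:ℝ) ∈ Icc u v := ⟨by rw [hu]; linarith, by rw [hv]; linarith⟩
    have h1m : (1:ℝ) ∈ Icc u v := ⟨by rw [hu]; linarith, by rw [hv]; linarith⟩
    have Ix := KEY u v huv x hxm
    have I0 := KEY u v huv 0 h0m
    have I1 := KEY u v huv 1 h1m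
    have hguv : g u - g v ≠ 0 :=
      sub_ne_zero.2 (fun hh => absurd (ginj hh) (ne_of_lt huv))
    set lx := (g x - g v)/(g u - g v) with hlx
    set l0 := (g 0 - g v)/(g u - g v) with hl0
    set l1 := (g 1 - g v)/(g u - g v) with hl1
    have hdiff : l0 - l1 = (g 0 - g 1)/(g u - g v) := by
      rw [hl0, hl1]; ring
    have hne : l0 - l1 ≠ 0 := by
      intro hh
      rw [hdiff] at hh
      rcases div_eq_zero_iff.1 hh with hh' | hh'
      · have : g 0 = g 1 := by linarith
        have := ginj this
        norm_num at this
      · exact hguv hh'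
    have I0' : ∀ s, g s = l0 * g (s + u) + (1 - l0) * g (s + v) := by
      intro s
      have := I0 s
      rwa [add_zero] at this
    refine ⟨(lx - l1)/(l0 - l1), fun s => ?_⟩
    have hαm : (lx - l1)/(l0 - l1) * (l0 - l1) = lx - l1 := div_mul_cancel₀ _ hne
    rw [Ix s, I0' s, I1 s]
    linear_combination (g (s+v) - g (s+u)) * hαm
  -- reduce to the Cauchy-type equation
  have hg01 : g 1 - g 0 ≠ 0 :=
    sub_ne_zero.2 (fun hh => by have := ginj hh; norm_num at this)
  set h : ℝ → ℝ := fun x => g x - g 0 with hhdef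
  have hh1 : h 1 ≠ 0 := hg01
  have FE2 : ∀ x s, g (s + x) = g s + (h x / h 1) * (g (s + 1) - g s) := by
    intro x s
    obtain ⟨α, hα⟩ := FE x
    have e0 := hα 0
    simp only [zero_add] at e0
    have hxα : h x = (1 - α) * h 1 := by
      simp only [hhdef]
      linear_combination e0
    have hα' : 1 - α = h x / h 1 := by rw [hxα]; field_simp
    linear_combination hα s + (g (s+1) - g s) * hα'
  have FE3 : ∃ c : ℝ, ∀ x s, h (x + s) = h x + h s + c * h x * h s := by
    set kk : ℝ → ℝ := fun s => (g (s+1) - g s)/h 1 with hkk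
    have FE2' : ∀ x s, h (s + x) = h s + h x * kk s := by
      intro x s
      have hfe := FE2 x s
      simp only [hhdef] at hfe
      simp only [hkk, hhdef]
      linear_combination hfe
    have hsym : ∀ x, kk x = 1 + ((kk 1 - 1)/h 1) * h x := by
      intro x
      have e1 := FE2' x 1
      have e2 := FE2' 1 x
      have e3 : h x + h 1 * kk x = h 1 + h x * kk 1 := by
        calc h x + h 1 * kk x = h (x + 1) := e2.symm
          _ = h (1 + x) := by rw [add_comm]
          _ = h 1 + h x * kk 1 := e1
      field_simp
      linear_combination e3
    refine ⟨(kk 1 - 1)/h 1, fun x s => ?_⟩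
    have hfx := FE2' x s
    rw [hsym s] at hfx
    rw [show x + s = s + x by ring]
    linear_combination hfx
  obtain ⟨c, hc⟩ := FE3
  -- oddness instances from reciprocity
  obtain ⟨m, hm⟩ := hex 1 0
  have hodd := step_b 1 0 m hm
  rw [neg_zero] at hodd
  have hm1 : h m = p₀ * h 1 := by
    simp only [hhdef]
    linear_combination hm + (g 0) * hqdef
  have hm2 : h (-m) = p₀ * h (-1) := by
    simp only [hhdef]
    linear_combination hodd + (g 0) * hqdef
  have hhc : Continuous h := hgc.sub continuous_const
  have hh0 : h 0 = 0 := by simp [hhdef]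
  obtain ⟨a, ha0, hax⟩ := aux_solve h hhc hh0 hh1 c hc p₀ q hp0 hq0 hpq m hm1 hm2
  -- conclusion
  refine ⟨a, g 0, ha0, fun t ht => ?_⟩
  have hgt : g (Real.log t) = Real.log (γ t) := by
    rw [hgdef]; simp [Real.exp_log ht]
  have h1t : γ t = Real.exp (g (Real.log t)) := by
    rw [hgt, Real.exp_log (hγ_maps t ht)]
  have h2t : g (Real.log t) = a * Real.log t + g 0 := by
    have := hax (Real.log t)
    simp only [hhdef] at this
    linarith
  rw [h1t, h2t, Real.exp_add, Real.rpow_def_of_pos ht]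
  rw [mul_comm (Real.log t) a, mul_comm]
end
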